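/- arXiv:1406.0316 — 7 statements merged into one kernel-verified Lean document; each statement's English description precedes it below -/
import Mathlib

section
/- Let N > 2 be an integer, α > 2 and β ≥ α. Then the function Ṽ(x) = |x|^β/(1 + |x|^α) belongs to the reverse Hölder class B_∞: there exists a constant C > 0 such that for every ball B = B(x₀, r) ⊂ ℝ^N, the essential supremum of Ṽ over B is at most C·(1/|B|)∫_B Ṽ(x) dx, where |B| denotes the Lebesgue measure of B. -/
open Real MeasureTheory Metric

/-- For `N > 2`, `α > 2`, `β ≥ α`, the function
`Ṽ(x) = |x|^β / (1 + |x|^α)` belongs to the reverse Hölder class `B_∞`: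
there exists `C > 0` such that for every ball `B(x₀, r) ⊂ ℝ^N`,
`‖Ṽ‖_{L^∞(B)} ≤ C (1/|B|) ∫_B Ṽ`. -/
theorem tildeV_mem_Binfty (N : ℕ) (hN : 2 < N) (α β : ℝ) (hα : 2 < α) (hβ : α ≤ β) :
    ∃ C : ℝ, 0 < C ∧ ∀ (x₀ : EuclideanSpace ℝ (Fin N)) (r : ℝ), 0 < r →
      essSup (fun x : EuclideanSpace ℝ (Fin N) => ‖x‖ ^ β / (1 + ‖x‖ ^ α))
          (volume.restrict (Metric.ball x₀ r))
        ≤ C * (((volume (Metric.ball x₀ r)).toReal)⁻¹ *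
            ∫ x in Metric.ball x₀ r, ‖x‖ ^ β / (1 + ‖x‖ ^ α)) := by
  have hα0 : (0:ℝ) < α := by linarith
  have hβ0 : (0:ℝ) < β := by linarith
  haveI : NeZero N := ⟨by omega⟩
  set f : ℝ → ℝ := fun t => t ^ β / (1 + t ^ α) with hf
  have hden : ∀ t : ℝ, 0 ≤ t → 0 < 1 + t ^ α := by
    intro t ht
    have : (0:ℝ) ≤ t ^ α := Real.rpow_nonneg ht α
    linarith
  -- monotonicity of f on [0, ∞)
  have hmono : ∀ s t : ℝ, 0 ≤ s → s ≤ t → f s ≤ f t := by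
    intro s t hs hst
    have ht : 0 ≤ t := hs.trans hst
    simp only [hf]
    rw [div_le_div_iff₀ (hden s hs) (hden t ht)]
    have h1 : s ^ β ≤ t ^ β := Real.rpow_le_rpow hs hst hβ0.le
    have h2 : s ^ β * t ^ α ≤ t ^ β * s ^ α := by
      rcases eq_or_lt_of_le hs with heq | hs'
      · rw [← heq, Real.zero_rpow hβ0.ne', Real.zero_rpow hα0.ne']
        simp
      · have ht' : 0 < t := hs'.trans_le hst
        have hq1 : s / t ≤ 1 := (div_le_one ht').mpr hst
        have key : (s / t) ^ β ≤ (s / t) ^ α :=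
          Real.rpow_le_rpow_of_exponent_ge (div_pos hs' ht') hq1 hβ
        rw [Real.div_rpow hs ht'.le, Real.div_rpow hs ht'.le] at key
        rw [div_le_div_iff₀ (by positivity) (by positivity)] at key
        linarith [key]
    nlinarith [h1, h2]
  -- doubling: f M ≤ 4^β * f (M/4)
  have hdouble : ∀ M : ℝ, 0 ≤ M → f M ≤ 4 ^ β * f (M / 4) := by
    intro M hM
    have h4 : (0:ℝ) < (4:ℝ) ^ β := Real.rpow_pos_of_pos (by norm_num) β
    have e1 : (M / 4) ^ β = M ^ β / 4 ^ β := Real.div_rpow hM (by norm_num : (0:ℝ) ≤ 4) β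
    have e2 : (M / 4) ^ α ≤ M ^ α :=
      Real.rpow_le_rpow (by positivity) (by linarith) hα0.le
    have hd1 : 0 < 1 + (M / 4) ^ α := hden _ (by positivity)
    have hd2 : 0 < 1 + M ^ α := hden _ hM
    have hnum : (0:ℝ) ≤ M ^ β := Real.rpow_nonneg hM β
    have heq : (4:ℝ) ^ β * f (M / 4) = M ^ β / (1 + (M / 4) ^ α) := by
      simp only [hf, e1]
      field_simp
    rw [heq]
    simp only [hf]
    exact div_le_div_of_nonneg_left hnum hd1 (by linarith)
  refine ⟨4 ^ β * 4 ^ N, by positivity, ?_⟩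
  intro x₀ r hr
  set M := ‖x₀‖ + r with hMdef
  have hx₀ : (0:ℝ) ≤ ‖x₀‖ := norm_nonneg _
  have hM0 : 0 < M := by positivity
  -- continuity, hence integrability on balls
  have hcont : Continuous fun x : EuclideanSpace ℝ (Fin N) => ‖x‖ ^ β / (1 + ‖x‖ ^ α) := by
    apply Continuous.div
    · exact continuous_norm.rpow_const fun x => Or.inr hβ0.le
    · exact continuous_const.add (continuous_norm.rpow_const fun x => Or.inr hα0.le)
    · intro x; exact (hden _ (norm_nonneg x)).ne'
  have hint : IntegrableOn (fun x : EuclideanSpace ℝ (Fin N) => ‖x‖ ^ β / (1 + ‖x‖ ^ α))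
      (ball x₀ r) volume :=
    ((hcont.locallyIntegrable).integrableOn_isCompact (isCompact_closedBall x₀ r)).mono_set
      ball_subset_closedBall
  -- essSup bound
  haveI hne : (ae (volume.restrict (ball x₀ r))).NeBot := by
    rw [ae_neBot, Ne, Measure.restrict_eq_zero]
    exact (measure_ball_pos volume x₀ hr).ne'
  have h_ess : essSup (fun x : EuclideanSpace ℝ (Fin N) => ‖x‖ ^ β / (1 + ‖x‖ ^ α))
      (volume.restrict (ball x₀ r)) ≤ f M := by
    apply Filter.limsup_le_of_le
      (Filter.isCoboundedUnder_le_of_le _ (fun x => by positivity))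
    filter_upwards [ae_restrict_mem measurableSet_ball] with x hx
    have hd : dist x x₀ < r := mem_ball.mp hx
    have hb : ‖x‖ - ‖x₀‖ ≤ ‖x - x₀‖ := norm_sub_norm_le x x₀
    rw [dist_eq_norm] at hd
    exact hmono ‖x‖ M (norm_nonneg x) (by simp only [hMdef]; linarith)
  -- a sub-ball at distance r/2 from the center, away from the origin
  obtain ⟨y, hy_norm, hy_dist⟩ : ∃ y : EuclideanSpace ℝ (Fin N),
      ‖y‖ = ‖x₀‖ + r / 2 ∧ dist y x₀ = r / 2 := by
    by_cases h0 : x₀ = 0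
    · obtain ⟨v, hv⟩ := exists_norm_eq (EuclideanSpace ℝ (Fin N))
        (show (0:ℝ) ≤ r / 2 by linarith)
      exact ⟨v, by simp [h0, hv], by simp [h0, dist_eq_norm, hv]⟩
    · have hx0' : (0:ℝ) < ‖x₀‖ := norm_pos_iff.mpr h0
      refine ⟨((‖x₀‖ + r / 2) / ‖x₀‖) • x₀, ?_, ?_⟩
      · rw [norm_smul, Real.norm_eq_abs, abs_of_pos (by positivity)]
        field_simp
      · have hc : (‖x₀‖ + r / 2) / ‖x₀‖ = 1 + (r / 2) / ‖x₀‖ := by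
          rw [add_div, div_self hx0'.ne']
        have hsub : ((‖x₀‖ + r / 2) / ‖x₀‖) • x₀ - x₀ = ((r / 2) / ‖x₀‖) • x₀ := by
          rw [hc, add_smul, one_smul]
          abel
        rw [dist_eq_norm, hsub, norm_smul, Real.norm_eq_abs, abs_of_pos (by positivity)]
        field_simp
  have hsubset : ball y (r / 4) ⊆ ball x₀ r := by
    intro x hx
    have h1 : dist x y < r / 4 := mem_ball.mp hx
    rw [mem_ball]
    calc dist x x₀ ≤ dist x y + dist y x₀ := dist_triangle x y x₀
      _ < r / 4 + r / 2 := by rw [hy_dist]; linarith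
      _ ≤ r := by linarith
  have hlow : ∀ x ∈ ball y (r / 4), M / 4 ≤ ‖x‖ := by
    intro x hx
    have h1 : dist x y < r / 4 := mem_ball.mp hx
    rw [dist_eq_norm, norm_sub_rev] at h1
    have h2 : ‖y‖ - ‖x‖ ≤ ‖y - x‖ := norm_sub_norm_le y x
    rw [hy_norm] at h2
    simp only [hMdef]
    linarith
  -- volumes
  have hfinrank : Module.finrank ℝ (EuclideanSpace ℝ (Fin N)) = N := finrank_euclideanSpace_fin
  have hvol_pos : 0 < (volume (ball x₀ r)).toReal :=
    ENNReal.toReal_pos (measure_ball_pos volume x₀ hr).ne' measure_ball_lt_top.ne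
  have hvol' : (volume (ball y (r / 4))).toReal
      = (4:ℝ)⁻¹ ^ N * (volume (ball x₀ r)).toReal := by
    rw [Measure.addHaar_ball volume y (by linarith : (0:ℝ) ≤ r / 4),
      Measure.addHaar_ball volume x₀ hr.le, hfinrank]
    rw [ENNReal.toReal_mul, ENNReal.toReal_mul,
      ENNReal.toReal_ofReal (by positivity), ENNReal.toReal_ofReal (by positivity)]
    rw [div_pow, inv_pow]
    ring
  -- lower bound on the integral
  have h1 : f (M / 4) * (volume (ball y (r / 4))).toReal
      ≤ ∫ x in ball y (r / 4), ‖x‖ ^ β / (1 + ‖x‖ ^ α) := by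
    have := setIntegral_ge_of_const_le_real measurableSet_ball measure_ball_lt_top.ne
      (fun x hx => hmono (M / 4) ‖x‖ (by positivity) (hlow x hx))
      (hint.mono_set hsubset)
    exact this
  have h2 : (∫ x in ball y (r / 4), ‖x‖ ^ β / (1 + ‖x‖ ^ α))
      ≤ ∫ x in ball x₀ r, ‖x‖ ^ β / (1 + ‖x‖ ^ α) :=
    setIntegral_mono_set hint (Filter.Eventually.of_forall fun x => by positivity)
      (HasSubset.Subset.eventuallyLE hsubset)
  set v := (volume (ball x₀ r)).toReal with hv
  set I := ∫ x in ball x₀ r, ‖x‖ ^ β / (1 + ‖x‖ ^ α) with hI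
  have h4β : (0:ℝ) < (4:ℝ) ^ β := Real.rpow_pos_of_pos (by norm_num) β
  have h3 : f (M / 4) ≤ 4 ^ N * (v⁻¹ * I) := by
    have hvol2 : (0:ℝ) < (4:ℝ)⁻¹ ^ N * v := by positivity
    have hle : f (M / 4) * ((4:ℝ)⁻¹ ^ N * v) ≤ I := by
      rw [← hvol']; exact h1.trans h2
    rw [← le_div_iff₀ hvol2] at hle
    calc f (M / 4) ≤ I / ((4:ℝ)⁻¹ ^ N * v) := hle
      _ = 4 ^ N * (v⁻¹ * I) := by
          rw [inv_pow]
          field_simp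
  have hfinal : f M ≤ 4 ^ β * 4 ^ N * (v⁻¹ * I) :=
    calc f M ≤ 4 ^ β * f (M / 4) := hdouble M hM0.le
      _ ≤ 4 ^ β * (4 ^ N * (v⁻¹ * I)) := mul_le_mul_of_nonneg_left h3 h4β.le
      _ = 4 ^ β * 4 ^ N * (v⁻¹ * I) := by ring
  exact h_ess.trans hfinal
end

section
/- Let N > 2 be an integer, α > 2, β > 0, and let 1 < q < ∞ satisfy β − α > −N/q. Then the function Ṽ(x) = |x|^β/(1 + |x|^α) belongs to the reverse Hölder class B_q: there exists a constant C > 0 such that for every ball B ⊂ ℝ^N, ((1/|B|)∫_B Ṽ(x)^q dx)^{1/q} ≤ C (1/|B|)∫_B Ṽ(x) dx. In particular Ṽ ∈ B_{N/2} whenever β − α > −2, and Ṽ ∈ B_N whenever β − α > −1. -/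
open Real MeasureTheory Metric

section Aux

lemma annulus_integral_bound (N : ℕ) (hN : 0 < N) (γ R : ℝ) (hγ : -(N:ℝ) < γ) (hR : 1 ≤ R) :
    ∫ x in {x : EuclideanSpace ℝ (Fin N) | ‖x‖ ∈ Set.Ico 1 R}, ‖x‖ ^ γ
      ≤ (N : ℝ) * (volume (Metric.ball (0 : EuclideanSpace ℝ (Fin N)) 1)).toReal *
        (R ^ ((N:ℝ) + γ) / ((N:ℝ) + γ)) := by
  haveI : Nonempty (Fin N) := Fin.pos_iff_nonempty.mp hN
  set E := EuclideanSpace ℝ (Fin N)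
  have hdim : Module.finrank ℝ E = N := finrank_euclideanSpace_fin
  have key := integral_fun_norm_addHaar (E := E) volume
    (Set.indicator (Set.Ico 1 R) fun y => y ^ γ)
  rw [hdim] at key
  have hmeas : MeasurableSet {x : E | ‖x‖ ∈ Set.Ico 1 R} :=
    measurable_norm measurableSet_Ico
  have hL : (∫ x : E, Set.indicator (Set.Ico 1 R) (fun y => y ^ γ) ‖x‖)
      = ∫ x in {x : E | ‖x‖ ∈ Set.Ico 1 R}, ‖x‖ ^ γ := by
    rw [← integral_indicator hmeas]; rfl
  rw [hL] at key
  have hpt : ∀ y : ℝ, y ^ (N - 1) • Set.indicator (Set.Ico 1 R) (fun y => y ^ γ) y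
      = Set.indicator (Set.Ico 1 R) (fun y => y ^ ((N:ℝ) - 1 + γ)) y := by
    intro y
    by_cases h : y ∈ Set.Ico 1 R
    · have hy : (0:ℝ) < y := lt_of_lt_of_le one_pos h.1
      simp only [Set.indicator_of_mem h, smul_eq_mul]
      rw [← Real.rpow_natCast y (N-1), ← Real.rpow_add hy]
      congr 1
      rw [Nat.cast_sub hN]
      push_cast
      ring
    · simp [Set.indicator_of_notMem h]
  simp only [hpt] at key
  rw [key]
  have hinter : Set.Ioi (0:ℝ) ∩ Set.Ico 1 R = Set.Ico 1 R :=
    Set.inter_eq_right.mpr fun y hy => lt_of_lt_of_le one_pos hy.1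
  have hIoc : (∫ y in Set.Ioi (0:ℝ), Set.indicator (Set.Ico 1 R) (fun y => y ^ ((N:ℝ) - 1 + γ)) y)
      = ∫ y in (1:ℝ)..R, y ^ ((N:ℝ) - 1 + γ) := by
    rw [setIntegral_indicator measurableSet_Ico, hinter,
      intervalIntegral.integral_of_le hR, ← MeasureTheory.restrict_Ico_eq_restrict_Ioc]
  rw [hIoc, integral_rpow (Or.inl (by linarith))]
  have h1 : (N:ℝ) - 1 + γ + 1 = (N:ℝ) + γ := by ring
  rw [h1, Real.one_rpow, nsmul_eq_mul, smul_eq_mul]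
  have hNγ : (0:ℝ) < (N:ℝ) + γ := by linarith
  calc (N:ℝ) * ((volume (Metric.ball (0:E) 1)).toReal * ((R ^ ((N:ℝ) + γ) - 1) / ((N:ℝ) + γ)))
      ≤ (N:ℝ) * ((volume (Metric.ball (0:E) 1)).toReal * (R ^ ((N:ℝ) + γ) / ((N:ℝ) + γ))) := by
        gcongr
        linarith
    _ = (N : ℝ) * (volume (Metric.ball (0 : E) 1)).toReal * (R ^ ((N:ℝ) + γ) / ((N:ℝ) + γ)) := by
        ring

lemma ratio_bound (α β : ℝ) (hα : 0 < α) (hβ : 0 < β) {c s t : ℝ} (hc : 1 ≤ c)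
    (hs : 0 < s) (ht : 0 < t) (hts : t ≤ c * s) (hst : s ≤ c * t) :
    t ^ β / (1 + t ^ α) ≤ c ^ (β + α) * (s ^ β / (1 + s ^ α)) := by
  have hc0 : (0:ℝ) < c := lt_of_lt_of_le one_pos hc
  have hden_s : (0:ℝ) < 1 + s ^ α := by positivity
  have hden_t : (0:ℝ) < 1 + t ^ α := by positivity
  rw [mul_div_assoc' (c ^ (β + α)), div_le_div_iff₀ hden_t hden_s]
  have h1 : t ^ β ≤ c ^ β * s ^ β := by
    calc t ^ β ≤ (c * s) ^ β := Real.rpow_le_rpow ht.le hts hβ.le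
      _ = c ^ β * s ^ β := Real.mul_rpow hc0.le hs.le
  have h2 : 1 + s ^ α ≤ c ^ α * (1 + t ^ α) := by
    have ha : s ^ α ≤ c ^ α * t ^ α := by
      calc s ^ α ≤ (c * t) ^ α := Real.rpow_le_rpow hs.le hst hα.le
        _ = c ^ α * t ^ α := Real.mul_rpow hc0.le ht.le
    have hb : (1:ℝ) ≤ c ^ α := Real.one_le_rpow hc hα.le
    nlinarith
  calc t ^ β * (1 + s ^ α) ≤ (c ^ β * s ^ β) * (c ^ α * (1 + t ^ α)) := by
        apply mul_le_mul h1 h2 hden_s.le (by positivity)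
    _ = (c ^ β * c ^ α) * s ^ β * (1 + t ^ α) := by ring
    _ = c ^ (β + α) * s ^ β * (1 + t ^ α) := by rw [← Real.rpow_add hc0]

lemma key_step {q μB Iq I v K₁ K₂ C : ℝ} (hq : 0 < q) (hμB : 0 < μB) (hv : 0 < v)
    (hK₁ : 0 ≤ K₁) (hK₂ : 0 < K₂) (hIq : 0 ≤ Iq)
    (h1 : Iq ≤ K₁ * (μB * v ^ q)) (h2 : K₂ * (μB * v) ≤ I)
    (hC : K₁ ^ (1/q) / K₂ ≤ C) :
    (μB⁻¹ * Iq) ^ (1/q) ≤ C * (μB⁻¹ * I) := by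
  have hvq : (0:ℝ) < v ^ q := Real.rpow_pos_of_pos hv q
  have hC0 : 0 ≤ C := le_trans (by positivity) hC
  have e1 : μB⁻¹ * Iq ≤ K₁ * v ^ q := by
    rw [inv_mul_le_iff₀ hμB]
    calc Iq ≤ K₁ * (μB * v ^ q) := h1
      _ = μB * (K₁ * v ^ q) := by ring
  have e2 : K₂ * v ≤ μB⁻¹ * I := by
    rw [le_inv_mul_iff₀ hμB]
    calc μB * (K₂ * v) = K₂ * (μB * v) := by ring
      _ ≤ I := h2
  calc (μB⁻¹ * Iq) ^ (1/q) ≤ (K₁ * v ^ q) ^ (1/q) :=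
        Real.rpow_le_rpow (by positivity) e1 (by positivity)
    _ = K₁ ^ (1/q) * (v ^ q) ^ (1/q) := Real.mul_rpow hK₁ hvq.le
    _ = K₁ ^ (1/q) * v := by
        rw [← Real.rpow_mul hv.le, mul_one_div_cancel (ne_of_gt hq), Real.rpow_one]
    _ ≤ (C * K₂) * v := by
        apply mul_le_mul_of_nonneg_right _ hv.le
        rw [div_le_iff₀ hK₂] at hC; linarith
    _ = C * (K₂ * v) := by ring
    _ ≤ C * (μB⁻¹ * I) := mul_le_mul_of_nonneg_left e2 hC0

lemma integral_le_const_mul {X : Type*} [MeasurableSpace X] (μ : Measure X) {f : X → ℝ}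
    {s : Set X} (hs : MeasurableSet s) (hμ : μ s ≠ ⊤) (hf : IntegrableOn f s μ) {c : ℝ}
    (h : ∀ x ∈ s, f x ≤ c) : ∫ x in s, f x ∂μ ≤ (μ s).toReal * c := by
  have := setIntegral_mono_on hf (integrableOn_const hμ) hs h
  rwa [setIntegral_const, smul_eq_mul] at this

lemma const_mul_le_integral {X : Type*} [MeasurableSpace X] (μ : Measure X) {f : X → ℝ}
    {s : Set X} (hs : MeasurableSet s) (hμ : μ s ≠ ⊤) (hf : IntegrableOn f s μ) {c : ℝ}
    (h : ∀ x ∈ s, c ≤ f x) : (μ s).toReal * c ≤ ∫ x in s, f x ∂μ := by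
  have := setIntegral_mono_on (integrableOn_const hμ) hf hs h
  rwa [setIntegral_const, smul_eq_mul] at this

end Aux

set_option maxHeartbeats 2000000

/-- For `N > 2`, `α > 2`, `β > 0` and `1 < q < ∞` with `β - α > -N/q`, the
function `Ṽ(x) = |x|^β / (1 + |x|^α)` belongs to the reverse Hölder class `B_q`: there exists
`C > 0` such that for every ball `B = B(x₀, r) ⊂ ℝ^N`,
`((1/|B|) ∫_B Ṽ^q)^{1/q} ≤ C (1/|B|) ∫_B Ṽ`. -/
theorem tildeV_mem_Bq (N : ℕ) (hN : 2 < N) (α β q : ℝ)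
    (hα : 2 < α) (hβ : 0 < β) (hq : 1 < q) (hcond : -((N : ℝ) / q) < β - α) :
    ∃ C : ℝ, 0 < C ∧ ∀ (x₀ : EuclideanSpace ℝ (Fin N)) (r : ℝ), 0 < r →
      (((volume (Metric.ball x₀ r)).toReal)⁻¹ *
          ∫ x in Metric.ball x₀ r, (‖x‖ ^ β / (1 + ‖x‖ ^ α)) ^ q) ^ (1 / q)
        ≤ C * (((volume (Metric.ball x₀ r)).toReal)⁻¹ *
            ∫ x in Metric.ball x₀ r, ‖x‖ ^ β / (1 + ‖x‖ ^ α)) := by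
  have hα0 : (0:ℝ) < α := by linarith
  have hq0 : (0:ℝ) < q := by linarith
  have hNpos : 0 < N := by omega
  haveI : Nonempty (Fin N) := Fin.pos_iff_nonempty.mp hNpos
  set γ : ℝ := (β - α) * q with hγdef
  have hγN : -(N:ℝ) < γ := by
    have h := mul_lt_mul_of_pos_right hcond hq0
    have h' : -((N:ℝ)/q) * q = -(N:ℝ) := by field_simp
    rw [h'] at h
    exact h
  have hNγ : (0:ℝ) < (N:ℝ) + γ := by linarith
  have hvol1 : (0:ℝ) < (volume (Metric.ball (0 : EuclideanSpace ℝ (Fin N)) 1)).toReal :=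
    ENNReal.toReal_pos (measure_ball_pos volume _ one_pos).ne' measure_ball_lt_top.ne
  -- constants
  set K₁a : ℝ := 2 ^ ((β+α)*q) with hK₁a
  set K₂a : ℝ := ((2:ℝ) ^ (β+α))⁻¹ with hK₂a
  set K₁b : ℝ := 3 ^ (β*q) * 2 ^ q with hK₁b
  set K₁c : ℝ := 2 ^ q * (1 + N * 3 ^ ((N:ℝ)+γ) / ((N:ℝ)+γ)) with hK₁c
  set K₂bc : ℝ := (((4:ℝ)^N)⁻¹) * (((4:ℝ) ^ (β+α))⁻¹) with hK₂bc
  have hK₁a0 : (0:ℝ) < K₁a := by rw [hK₁a]; positivity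
  have hK₂a0 : (0:ℝ) < K₂a := by rw [hK₂a]; positivity
  have hK₁b0 : (0:ℝ) < K₁b := by rw [hK₁b]; positivity
  have hK₁c0 : (0:ℝ) < K₁c := by rw [hK₁c]; positivity
  have hK₂bc0 : (0:ℝ) < K₂bc := by rw [hK₂bc]; positivity
  refine ⟨max (K₁a^(1/q)/K₂a) (max (K₁b^(1/q)/K₂bc) (K₁c^(1/q)/K₂bc)), ?_, ?_⟩
  · exact lt_of_lt_of_le (by positivity) (le_max_left _ _)
  intro x₀ r hr
  -- basic facts about the ball
  have hμBeq : (volume (Metric.ball x₀ r)).toReal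
      = r ^ N * (volume (Metric.ball (0 : EuclideanSpace ℝ (Fin N)) 1)).toReal := by
    rw [Measure.addHaar_ball _ _ hr.le, ENNReal.toReal_mul, ENNReal.toReal_ofReal (by positivity)]
    simp [finrank_euclideanSpace_fin]
  have hμBpos : (0:ℝ) < (volume (Metric.ball x₀ r)).toReal :=
    ENNReal.toReal_pos (measure_ball_pos volume x₀ hr).ne' measure_ball_lt_top.ne
  -- continuity and integrability
  have hVcont : Continuous (fun x : EuclideanSpace ℝ (Fin N) => ‖x‖ ^ β / (1 + ‖x‖ ^ α)) := by
    refine Continuous.div (continuous_norm.rpow_const fun x => Or.inr hβ.le)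
      (continuous_const.add (continuous_norm.rpow_const fun x => Or.inr hα0.le))
      (fun x => by positivity)
  have hVqcont : Continuous (fun x : EuclideanSpace ℝ (Fin N) => (‖x‖ ^ β / (1 + ‖x‖ ^ α)) ^ q) :=
    hVcont.rpow_const fun x => Or.inr hq0.le
  have hVint : ∀ (c : EuclideanSpace ℝ (Fin N)) (R : ℝ),
      IntegrableOn (fun x => ‖x‖ ^ β / (1 + ‖x‖ ^ α)) (Metric.ball c R) volume := fun c R =>
    (hVcont.continuousOn.integrableOn_compact (isCompact_closedBall c R)).mono_set
      ball_subset_closedBall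
  have hVqint : ∀ (c : EuclideanSpace ℝ (Fin N)) (R : ℝ),
      IntegrableOn (fun x => (‖x‖ ^ β / (1 + ‖x‖ ^ α)) ^ q) (Metric.ball c R) volume := fun c R =>
    (hVqcont.continuousOn.integrableOn_compact (isCompact_closedBall c R)).mono_set
      ball_subset_closedBall
  have hVnn : ∀ x : EuclideanSpace ℝ (Fin N), 0 ≤ ‖x‖ ^ β / (1 + ‖x‖ ^ α) := fun x => by positivity
  have hIqnn : (0:ℝ) ≤ ∫ x in Metric.ball x₀ r, (‖x‖ ^ β / (1 + ‖x‖ ^ α)) ^ q :=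
    setIntegral_nonneg measurableSet_ball fun x _ => by positivity
  -- LOWER BOUND, case ‖x₀‖ < 2r (construction of a good sub-ball)
  rcases le_or_gt (2*r) ‖x₀‖ with hcase | hcase
  · -- Case 1 : ball far from origin
    have hs : (0:ℝ) < ‖x₀‖ := by linarith
    set v : ℝ := ‖x₀‖ ^ β / (1 + ‖x₀‖ ^ α) with hvdef
    have hv : 0 < v := by rw [hvdef]; positivity
    have hbounds : ∀ x ∈ Metric.ball x₀ r, ‖x₀‖ ≤ 2 * ‖x‖ ∧ ‖x‖ ≤ 2 * ‖x₀‖ ∧ 0 < ‖x‖ := by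
      intro x hx
      rw [mem_ball, dist_eq_norm] at hx
      have h1 : ‖x₀‖ - ‖x‖ ≤ ‖x - x₀‖ := by
        have := norm_sub_norm_le x₀ x
        rwa [← norm_neg (x₀ - x), neg_sub] at this
      have h2 : ‖x‖ - ‖x₀‖ ≤ ‖x - x₀‖ := norm_sub_norm_le x x₀
      constructor
      · linarith
      constructor
      · linarith
      · linarith
    have hup : ∀ x ∈ Metric.ball x₀ r,
        (‖x‖ ^ β / (1 + ‖x‖ ^ α)) ^ q ≤ K₁a * v ^ q := by
      intro x hx
      obtain ⟨hb1, hb2, hb3⟩ := hbounds x hx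
      have h := ratio_bound α β hα0 hβ (c := 2) one_le_two hs hb3 hb2 hb1
      calc (‖x‖ ^ β / (1 + ‖x‖ ^ α)) ^ q ≤ ((2:ℝ) ^ (β+α) * v) ^ q :=
            Real.rpow_le_rpow (hVnn x) h hq0.le
        _ = ((2:ℝ) ^ (β+α)) ^ q * v ^ q := Real.mul_rpow (by positivity) hv.le
        _ = K₁a * v ^ q := by rw [hK₁a, ← Real.rpow_mul (by norm_num : (0:ℝ) ≤ 2)]
    have hlo : ∀ x ∈ Metric.ball x₀ r, K₂a * v ≤ ‖x‖ ^ β / (1 + ‖x‖ ^ α) := by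
      intro x hx
      obtain ⟨hb1, hb2, hb3⟩ := hbounds x hx
      have h := ratio_bound α β hα0 hβ (c := 2) one_le_two hb3 hs hb1 hb2
      rw [hK₂a, inv_mul_le_iff₀ (by positivity)]
      exact h
    have h1 : (∫ x in Metric.ball x₀ r, (‖x‖ ^ β / (1 + ‖x‖ ^ α)) ^ q)
        ≤ K₁a * ((volume (Metric.ball x₀ r)).toReal * v ^ q) := by
      have := integral_le_const_mul volume measurableSet_ball measure_ball_lt_top.ne
        (hVqint x₀ r) hup
      calc (∫ x in Metric.ball x₀ r, (‖x‖ ^ β / (1 + ‖x‖ ^ α)) ^ q)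
          ≤ (volume (Metric.ball x₀ r)).toReal * (K₁a * v ^ q) := this
        _ = K₁a * ((volume (Metric.ball x₀ r)).toReal * v ^ q) := by ring
    have h2 : K₂a * ((volume (Metric.ball x₀ r)).toReal * v)
        ≤ ∫ x in Metric.ball x₀ r, ‖x‖ ^ β / (1 + ‖x‖ ^ α) := by
      have := const_mul_le_integral volume measurableSet_ball measure_ball_lt_top.ne
        (hVint x₀ r) hlo
      calc K₂a * ((volume (Metric.ball x₀ r)).toReal * v)
          = (volume (Metric.ball x₀ r)).toReal * (K₂a * v) := by ring
        _ ≤ _ := this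
    exact key_step hq0 hμBpos hv hK₁a0.le hK₂a0 hIqnn h1 h2
      (le_max_left _ _)
  · -- Case 2 : ball close to the origin
    set v : ℝ := r ^ β / (1 + r ^ α) with hvdef
    have hv : 0 < v := by rw [hvdef]; positivity
    -- lower bound via a sub-ball at distance ~ r from the origin
    have h2 : K₂bc * ((volume (Metric.ball x₀ r)).toReal * v)
        ≤ ∫ x in Metric.ball x₀ r, ‖x‖ ^ β / (1 + ‖x‖ ^ α) := by
      haveI : NeZero N := ⟨hNpos.ne'⟩
      set e : EuclideanSpace ℝ (Fin N) := EuclideanSpace.single (0 : Fin N) (1:ℝ) with he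
      have hne : ‖e‖ = 1 := by rw [he, EuclideanSpace.norm_single]; norm_num
      have hzex : ∃ z : EuclideanSpace ℝ (Fin N), ‖z - x₀‖ = r/2 ∧ r/2 ≤ ‖z‖ := by
        by_cases hcz : r/2 ≤ ‖x₀ + (r/2) • e‖
        · refine ⟨x₀ + (r/2) • e, ?_, hcz⟩
          rw [add_sub_cancel_left, norm_smul, hne, Real.norm_eq_abs,
            abs_of_pos (by linarith), mul_one]
        · refine ⟨x₀ - (r/2) • e, ?_, ?_⟩
          · rw [sub_sub_cancel_left, norm_neg, norm_smul, hne, Real.norm_eq_abs,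
              abs_of_pos (by linarith), mul_one]
          · push_neg at hcz
            have hd : (x₀ + (r/2) • e) - (x₀ - (r/2) • e) = r • e := by
              module
            have htri := norm_sub_le (x₀ + (r/2) • e) (x₀ - (r/2) • e)
            rw [hd, norm_smul, hne, Real.norm_eq_abs, abs_of_pos hr, mul_one] at htri
            linarith
      obtain ⟨z, hz1, hz2⟩ := hzex
      have hz3 : ‖z‖ ≤ ‖x₀‖ + r/2 := by
        have := norm_sub_le z x₀  -- wrong direction; use triangle
        calc ‖z‖ = ‖(z - x₀) + x₀‖ := by rw [sub_add_cancel]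
          _ ≤ ‖z - x₀‖ + ‖x₀‖ := norm_add_le _ _
          _ = ‖x₀‖ + r/2 := by rw [hz1]; ring
      have hsub : Metric.ball z (r/4) ⊆ Metric.ball x₀ r := by
        intro y hy
        rw [mem_ball] at hy ⊢
        have : dist y x₀ ≤ dist y z + dist z x₀ := dist_triangle y z x₀
        rw [dist_eq_norm z x₀, hz1] at this
        linarith
      have hxlo : ∀ x ∈ Metric.ball z (r/4), r ≤ 4 * ‖x‖ ∧ ‖x‖ ≤ 4 * r ∧ 0 < ‖x‖ := by
        intro x hx
        rw [mem_ball, dist_eq_norm] at hx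
        have h1 : ‖z‖ - ‖x‖ ≤ ‖x - z‖ := by
          have := norm_sub_norm_le z x
          rwa [← norm_neg (z - x), neg_sub] at this
        have h2 : ‖x‖ - ‖z‖ ≤ ‖x - z‖ := norm_sub_norm_le x z
        have hx₀ : ‖x₀‖ ≤ 2*r := hcase.le
        constructor
        · linarith
        constructor
        · linarith
        · linarith
      have hlo : ∀ x ∈ Metric.ball z (r/4),
          ((4:ℝ) ^ (β+α))⁻¹ * v ≤ ‖x‖ ^ β / (1 + ‖x‖ ^ α) := by
        intro x hx
        obtain ⟨hb1, hb2, hb3⟩ := hxlo x hx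
        have h := ratio_bound α β hα0 hβ (c := 4) (by norm_num) hb3 hr hb1 hb2
        rw [inv_mul_le_iff₀ (by positivity)]
        exact h
      have hmono : (∫ x in Metric.ball z (r/4), ‖x‖ ^ β / (1 + ‖x‖ ^ α))
          ≤ ∫ x in Metric.ball x₀ r, ‖x‖ ^ β / (1 + ‖x‖ ^ α) :=
        setIntegral_mono_set (hVint x₀ r) (Filter.Eventually.of_forall fun x => hVnn x)
          (HasSubset.Subset.eventuallyLE hsub)
      have hlow := const_mul_le_integral volume measurableSet_ball measure_ball_lt_top.ne
        (hVint z (r/4)) hlo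
      have hz4 : (volume (Metric.ball z (r/4))).toReal
          = (r/4) ^ N * (volume (Metric.ball (0 : EuclideanSpace ℝ (Fin N)) 1)).toReal := by
        rw [Measure.addHaar_ball _ _ (by positivity : (0:ℝ) ≤ r/4), ENNReal.toReal_mul,
          ENNReal.toReal_ofReal (by positivity)]
        simp [finrank_euclideanSpace_fin]
      calc K₂bc * ((volume (Metric.ball x₀ r)).toReal * v)
          = (volume (Metric.ball z (r/4))).toReal * (((4:ℝ) ^ (β+α))⁻¹ * v) := by
            rw [hz4, hμBeq, hK₂bc, div_pow]
            have h4N : ((4:ℝ) ^ N) ≠ 0 := by positivity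
            have h4ba : ((4:ℝ) ^ (β+α)) ≠ 0 := by positivity
            have algid0 : ∀ a vv : ℝ, ((4:ℝ)^N)⁻¹ * ((4:ℝ)^(β+α))⁻¹ * (r^N * a * vv)
                = r^N / 4^N * a * (((4:ℝ)^(β+α))⁻¹ * vv) := by
              intro a vv
              field_simp
            exact algid0 _ _
        _ ≤ ∫ x in Metric.ball z (r/4), ‖x‖ ^ β / (1 + ‖x‖ ^ α) := hlow
        _ ≤ _ := hmono
    -- upper bound
    rcases le_or_gt r 1 with hr1 | hr1
    · -- r ≤ 1 : use V ≤ (3r)^β on the ball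
      have hup : ∀ x ∈ Metric.ball x₀ r,
          (‖x‖ ^ β / (1 + ‖x‖ ^ α)) ^ q ≤ 3 ^ (β*q) * r ^ (β*q) := by
        intro x hx
        rw [mem_ball, dist_eq_norm] at hx
        have hxn : ‖x‖ ≤ 3 * r := by
          have h2 : ‖x‖ - ‖x₀‖ ≤ ‖x - x₀‖ := norm_sub_norm_le x x₀
          linarith
        have hVle : ‖x‖ ^ β / (1 + ‖x‖ ^ α) ≤ (3*r) ^ β := by
          calc ‖x‖ ^ β / (1 + ‖x‖ ^ α) ≤ ‖x‖ ^ β := by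
                apply div_le_self (by positivity)
                have : (0:ℝ) ≤ ‖x‖ ^ α := by positivity
                linarith
            _ ≤ (3*r) ^ β := Real.rpow_le_rpow (norm_nonneg x) hxn hβ.le
        calc (‖x‖ ^ β / (1 + ‖x‖ ^ α)) ^ q ≤ ((3*r) ^ β) ^ q :=
              Real.rpow_le_rpow (hVnn x) hVle hq0.le
          _ = (3*r) ^ (β*q) := by rw [← Real.rpow_mul (by positivity)]
          _ = 3 ^ (β*q) * r ^ (β*q) := Real.mul_rpow (by norm_num) hr.le
      have hvq : r ^ (β*q) / 2 ^ q ≤ v ^ q := by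
        rw [hvdef, Real.div_rpow (by positivity) (by positivity),
          ← Real.rpow_mul hr.le]
        apply div_le_div_of_nonneg_left (by positivity) (by positivity)
        calc (1 + r ^ α) ^ q ≤ (2:ℝ) ^ q := by
              apply Real.rpow_le_rpow (by positivity) _ hq0.le
              have : r ^ α ≤ 1 := Real.rpow_le_one hr.le hr1 hα0.le
              linarith
          _ = 2 ^ q := rfl
      have h1 : (∫ x in Metric.ball x₀ r, (‖x‖ ^ β / (1 + ‖x‖ ^ α)) ^ q)
          ≤ K₁b * ((volume (Metric.ball x₀ r)).toReal * v ^ q) := by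
        calc (∫ x in Metric.ball x₀ r, (‖x‖ ^ β / (1 + ‖x‖ ^ α)) ^ q)
            ≤ (volume (Metric.ball x₀ r)).toReal * (3 ^ (β*q) * r ^ (β*q)) :=
              integral_le_const_mul volume measurableSet_ball measure_ball_lt_top.ne
                (hVqint x₀ r) hup
          _ = K₁b * ((volume (Metric.ball x₀ r)).toReal * (r ^ (β*q) / 2 ^ q)) := by
              rw [hK₁b]
              have h2q : (2:ℝ) ^ q ≠ 0 := by positivity
              have algid3 : ∀ a rr : ℝ, a * (3 ^ (β*q) * rr)
                  = 3 ^ (β*q) * 2 ^ q * (a * (rr / 2 ^ q)) := by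
                intro a rr
                field_simp
              exact algid3 _ _
          _ ≤ K₁b * ((volume (Metric.ball x₀ r)).toReal * v ^ q) := by
              apply mul_le_mul_of_nonneg_left _ hK₁b0.le
              exact mul_le_mul_of_nonneg_left hvq hμBpos.le
      exact key_step hq0 hμBpos hv hK₁b0.le hK₂bc0 hIqnn h1 h2
        ((le_max_left _ _).trans (le_max_right _ _))
    · -- 1 < r : split ball 0 (3r) into the unit ball and an annulus
      have hr1' : (1:ℝ) ≤ r := hr1.le
      have h3r : (1:ℝ) ≤ 3*r := by linarith
      have hAmeas : MeasurableSet {x : EuclideanSpace ℝ (Fin N) | ‖x‖ ∈ Set.Ico 1 (3*r)} :=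
        measurable_norm measurableSet_Ico
      have hAsub : {x : EuclideanSpace ℝ (Fin N) | ‖x‖ ∈ Set.Ico 1 (3*r)}
          ⊆ Metric.ball (0 : EuclideanSpace ℝ (Fin N)) (3*r) :=
        fun x hx => mem_ball_zero_iff.mpr hx.2
      have hBsub : Metric.ball x₀ r ⊆ Metric.ball (0 : EuclideanSpace ℝ (Fin N)) (3*r) := by
        intro x hx
        rw [mem_ball, dist_eq_norm] at hx
        rw [mem_ball_zero_iff]
        have := norm_sub_norm_le x x₀
        linarith
      have hsplit : Metric.ball (0 : EuclideanSpace ℝ (Fin N)) (3*r)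
          = Metric.ball 0 1 ∪ {x : EuclideanSpace ℝ (Fin N) | ‖x‖ ∈ Set.Ico 1 (3*r)} := by
        ext x
        simp only [mem_ball_zero_iff, Set.mem_union, Set.mem_setOf_eq, Set.mem_Ico]
        constructor
        · intro h
          rcases lt_or_ge ‖x‖ 1 with h1 | h1
          · exact Or.inl h1
          · exact Or.inr ⟨h1, h⟩
        · rintro (h | ⟨h1, h2⟩)
          · linarith
          · exact h2
      have hdisj : Disjoint (Metric.ball (0 : EuclideanSpace ℝ (Fin N)) 1)
          {x : EuclideanSpace ℝ (Fin N) | ‖x‖ ∈ Set.Ico 1 (3*r)} := by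
        rw [Set.disjoint_left]
        intro x hx hxA
        rw [mem_ball_zero_iff] at hx
        exact absurd hxA.1 (not_le.mpr hx)
      have hint1 : IntegrableOn (fun x : EuclideanSpace ℝ (Fin N) => (‖x‖^β/(1+‖x‖^α))^q)
          (Metric.ball (0 : EuclideanSpace ℝ (Fin N)) 1) volume := hVqint 0 1
      have hintA : IntegrableOn (fun x : EuclideanSpace ℝ (Fin N) => (‖x‖^β/(1+‖x‖^α))^q)
          {x : EuclideanSpace ℝ (Fin N) | ‖x‖ ∈ Set.Ico 1 (3*r)} volume :=
        (hVqint 0 (3*r)).mono_set hAsub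
      have e1 : (∫ x in Metric.ball x₀ r, (‖x‖ ^ β / (1 + ‖x‖ ^ α)) ^ q)
          ≤ ∫ x in Metric.ball (0 : EuclideanSpace ℝ (Fin N)) (3*r),
              (‖x‖ ^ β / (1 + ‖x‖ ^ α)) ^ q :=
        setIntegral_mono_set (hVqint 0 (3*r))
          (Filter.Eventually.of_forall fun x => by positivity)
          (HasSubset.Subset.eventuallyLE hBsub)
      have e2 : (∫ x in Metric.ball (0 : EuclideanSpace ℝ (Fin N)) (3*r),
              (‖x‖ ^ β / (1 + ‖x‖ ^ α)) ^ q)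
          = (∫ x in Metric.ball (0 : EuclideanSpace ℝ (Fin N)) 1,
              (‖x‖ ^ β / (1 + ‖x‖ ^ α)) ^ q)
            + ∫ x in {x : EuclideanSpace ℝ (Fin N) | ‖x‖ ∈ Set.Ico 1 (3*r)},
                (‖x‖ ^ β / (1 + ‖x‖ ^ α)) ^ q := by
        rw [hsplit]
        exact setIntegral_union hdisj hAmeas hint1 hintA
      have e3 : (∫ x in Metric.ball (0 : EuclideanSpace ℝ (Fin N)) 1,
            (‖x‖ ^ β / (1 + ‖x‖ ^ α)) ^ q)
          ≤ (volume (Metric.ball (0 : EuclideanSpace ℝ (Fin N)) 1)).toReal * 1 := by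
        apply integral_le_const_mul volume measurableSet_ball measure_ball_lt_top.ne hint1
        intro x hx
        rw [mem_ball_zero_iff] at hx
        have hV1 : ‖x‖ ^ β / (1 + ‖x‖ ^ α) ≤ 1 := by
          calc ‖x‖ ^ β / (1 + ‖x‖ ^ α) ≤ ‖x‖ ^ β := by
                apply div_le_self (by positivity)
                have : (0:ℝ) ≤ ‖x‖ ^ α := by positivity
                linarith
            _ ≤ 1 := Real.rpow_le_one (norm_nonneg x) hx.le hβ.le
        exact Real.rpow_le_one (hVnn x) hV1 hq0.le
      have hKcompact : IsCompact (Metric.closedBall (0 : EuclideanSpace ℝ (Fin N)) (3*r)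
          \ Metric.ball 0 1) :=
        (isCompact_closedBall _ _).diff isOpen_ball
      have hsubK : {x : EuclideanSpace ℝ (Fin N) | ‖x‖ ∈ Set.Ico 1 (3*r)}
          ⊆ Metric.closedBall (0 : EuclideanSpace ℝ (Fin N)) (3*r) \ Metric.ball 0 1 := by
        intro x hx
        refine ⟨mem_closedBall_zero_iff.mpr hx.2.le, fun hb => ?_⟩
        rw [mem_ball_zero_iff] at hb
        exact absurd hx.1 (not_le.mpr hb)
      have hγint : IntegrableOn (fun x : EuclideanSpace ℝ (Fin N) => ‖x‖ ^ γ)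
          {x : EuclideanSpace ℝ (Fin N) | ‖x‖ ∈ Set.Ico 1 (3*r)} volume := by
        apply IntegrableOn.mono_set _ hsubK
        apply ContinuousOn.integrableOn_compact hKcompact
        intro x hx
        apply ContinuousAt.continuousWithinAt
        apply ContinuousAt.rpow_const continuous_norm.continuousAt
        left
        intro h0
        have : ¬ (‖x‖ < 1) := fun h => hx.2 (mem_ball_zero_iff.mpr h)
        rw [h0] at this
        exact this one_pos
      have e4 : (∫ x in {x : EuclideanSpace ℝ (Fin N) | ‖x‖ ∈ Set.Ico 1 (3*r)},
            (‖x‖ ^ β / (1 + ‖x‖ ^ α)) ^ q)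
          ≤ ∫ x in {x : EuclideanSpace ℝ (Fin N) | ‖x‖ ∈ Set.Ico 1 (3*r)}, ‖x‖ ^ γ := by
        apply setIntegral_mono_on hintA hγint hAmeas
        intro x hx
        have hx1 : (1:ℝ) ≤ ‖x‖ := hx.1
        have hxpos : (0:ℝ) < ‖x‖ := lt_of_lt_of_le one_pos hx1
        have hVle : ‖x‖ ^ β / (1 + ‖x‖ ^ α) ≤ ‖x‖ ^ (β - α) := by
          rw [Real.rpow_sub hxpos]
          apply div_le_div_of_nonneg_left (by positivity) (by positivity)
          have : (0:ℝ) < 1 := one_pos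
          linarith
        calc (‖x‖ ^ β / (1 + ‖x‖ ^ α)) ^ q ≤ (‖x‖ ^ (β - α)) ^ q :=
              Real.rpow_le_rpow (hVnn x) hVle hq0.le
          _ = ‖x‖ ^ γ := by rw [hγdef, Real.rpow_mul (norm_nonneg x)]
      have e5 := annulus_integral_bound N hNpos γ (3*r) hγN h3r
      have hrN : (1:ℝ) ≤ r ^ ((N:ℝ)+γ) := Real.one_le_rpow hr1' hNγ.le
      have h3pow : ((3:ℝ)*r) ^ ((N:ℝ)+γ) = 3 ^ ((N:ℝ)+γ) * r ^ ((N:ℝ)+γ) :=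
        Real.mul_rpow (by norm_num) hr.le
      have hcomb : (∫ x in Metric.ball x₀ r, (‖x‖ ^ β / (1 + ‖x‖ ^ α)) ^ q)
          ≤ (volume (Metric.ball (0 : EuclideanSpace ℝ (Fin N)) 1)).toReal
              * (1 + (N:ℝ) * 3 ^ ((N:ℝ)+γ) / ((N:ℝ)+γ)) * r ^ ((N:ℝ)+γ) := by
        calc (∫ x in Metric.ball x₀ r, (‖x‖ ^ β / (1 + ‖x‖ ^ α)) ^ q)
            ≤ _ := e1
          _ = _ := e2
          _ ≤ (volume (Metric.ball (0 : EuclideanSpace ℝ (Fin N)) 1)).toReal * 1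
              + (N:ℝ) * (volume (Metric.ball (0 : EuclideanSpace ℝ (Fin N)) 1)).toReal
                * (((3:ℝ)*r) ^ ((N:ℝ)+γ) / ((N:ℝ)+γ)) := add_le_add e3 (e4.trans e5)
          _ ≤ (volume (Metric.ball (0 : EuclideanSpace ℝ (Fin N)) 1)).toReal
                * r ^ ((N:ℝ)+γ)
              + (N:ℝ) * (volume (Metric.ball (0 : EuclideanSpace ℝ (Fin N)) 1)).toReal
                * ((3 ^ ((N:ℝ)+γ) * r ^ ((N:ℝ)+γ)) / ((N:ℝ)+γ)) := by
              rw [h3pow]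
              apply add_le_add_left
              rw [mul_one]
              exact le_mul_of_one_le_right hvol1.le hrN
          _ = (volume (Metric.ball (0 : EuclideanSpace ℝ (Fin N)) 1)).toReal
              * (1 + (N:ℝ) * 3 ^ ((N:ℝ)+γ) / ((N:ℝ)+γ)) * r ^ ((N:ℝ)+γ) := by
              have hNg : ((N:ℝ)+γ) ≠ 0 := hNγ.ne'
              have algid1 : ∀ a rr : ℝ, a * rr
                  + (N:ℝ) * a * ((3 ^ ((N:ℝ)+γ) * rr) / ((N:ℝ)+γ))
                  = a * (1 + (N:ℝ) * 3 ^ ((N:ℝ)+γ) / ((N:ℝ)+γ)) * rr := by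
                intro a rr
                field_simp
              exact algid1 _ _
      have hvq2 : r ^ γ / 2 ^ q ≤ v ^ q := by
        have hstep1 : v ^ q = r ^ (β*q) / (1 + r ^ α) ^ q := by
          rw [hvdef, Real.div_rpow (by positivity) (by positivity), ← Real.rpow_mul hr.le]
        have hstep2 : (1 + r ^ α) ^ q ≤ 2 ^ q * r ^ (α*q) := by
          have hra : (1:ℝ) ≤ r ^ α := Real.one_le_rpow hr1' hα0.le
          calc (1 + r ^ α) ^ q ≤ ((2:ℝ) * r ^ α) ^ q :=
                Real.rpow_le_rpow (by positivity) (by linarith) hq0.le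
            _ = 2 ^ q * (r ^ α) ^ q := Real.mul_rpow (by norm_num) (by positivity)
            _ = 2 ^ q * r ^ (α*q) := by rw [← Real.rpow_mul hr.le]
        have hstep3 : r ^ (β*q) / (2 ^ q * r ^ (α*q)) ≤ r ^ (β*q) / (1 + r ^ α) ^ q := by
          apply div_le_div_of_nonneg_left (by positivity) (by positivity) hstep2
        have hstep4 : r ^ (β*q) / ((2:ℝ) ^ q * r ^ (α*q)) = r ^ γ / 2 ^ q := by
          have hsum : β*q = γ + α*q := by rw [hγdef]; ring
          rw [hsum, Real.rpow_add hr, div_eq_div_iff (by positivity) (by positivity)]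
          ring
        rw [hstep1]
        rw [hstep4] at hstep3
        exact hstep3
      have hμBvq : (volume (Metric.ball (0 : EuclideanSpace ℝ (Fin N)) 1)).toReal
            * r ^ ((N:ℝ)+γ) / 2 ^ q
          ≤ (volume (Metric.ball x₀ r)).toReal * v ^ q := by
        have hrNn : (r:ℝ) ^ N = r ^ ((N:ℝ)) := (Real.rpow_natCast r N).symm
        calc (volume (Metric.ball (0 : EuclideanSpace ℝ (Fin N)) 1)).toReal
              * r ^ ((N:ℝ)+γ) / 2 ^ q
            = r ^ N * (volume (Metric.ball (0 : EuclideanSpace ℝ (Fin N)) 1)).toReal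
                * (r ^ γ / 2 ^ q) := by
              rw [hrNn, Real.rpow_add hr]
              ring
          _ ≤ r ^ N * (volume (Metric.ball (0 : EuclideanSpace ℝ (Fin N)) 1)).toReal
                * v ^ q := by
              apply mul_le_mul_of_nonneg_left hvq2 (by positivity)
          _ = (volume (Metric.ball x₀ r)).toReal * v ^ q := by rw [hμBeq]
      have h1 : (∫ x in Metric.ball x₀ r, (‖x‖ ^ β / (1 + ‖x‖ ^ α)) ^ q)
          ≤ K₁c * ((volume (Metric.ball x₀ r)).toReal * v ^ q) := by
        calc (∫ x in Metric.ball x₀ r, (‖x‖ ^ β / (1 + ‖x‖ ^ α)) ^ q)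
            ≤ (volume (Metric.ball (0 : EuclideanSpace ℝ (Fin N)) 1)).toReal
                * (1 + (N:ℝ) * 3 ^ ((N:ℝ)+γ) / ((N:ℝ)+γ)) * r ^ ((N:ℝ)+γ) := hcomb
          _ = K₁c * ((volume (Metric.ball (0 : EuclideanSpace ℝ (Fin N)) 1)).toReal
                * r ^ ((N:ℝ)+γ) / 2 ^ q) := by
              rw [hK₁c]
              have h2q : (2:ℝ) ^ q ≠ 0 := by positivity
              have algid2 : ∀ a rr : ℝ, a * (1 + (N:ℝ) * 3 ^ ((N:ℝ)+γ) / ((N:ℝ)+γ)) * rr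
                  = (2 ^ q * (1 + (N:ℝ) * 3 ^ ((N:ℝ)+γ) / ((N:ℝ)+γ))) * (a * rr / 2 ^ q) := by
                intro a rr
                field_simp
              exact algid2 _ _
          _ ≤ K₁c * ((volume (Metric.ball x₀ r)).toReal * v ^ q) :=
              mul_le_mul_of_nonneg_left hμBvq hK₁c0.le
      exact key_step hq0 hμBpos hv hK₁c0.le hK₂bc0 hIqnn h1 h2
        ((le_max_right _ _).trans (le_max_right _ _))
end

section
/- Let N > 2 be an integer, α > 2 and β > α − 2. Then for every x ∈ ℝ^N the function f_x(r) = r^{2−N}∫_{B(x,r)} Ṽ(y) dy (r > 0) tends to 0 as r → 0⁺ and tends to +∞ as r → +∞. Consequently, the set {r > 0 : r^{2−N}∫_{B(x,r)} Ṽ(y) dy ≤ 1} is nonempty and bounded above, so its supremum R(x) satisfies 0 < R(x) < ∞ (equivalently, the Agmon-type function m(x) = 1/R(x) satisfies 0 < m(x) < ∞). -/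
open Real MeasureTheory Filter
open Metric

/-- For `N > 2`, `α > 2`, `β > α - 2` and every `x ∈ ℝ^N`, the function
`f_x(r) = r^{2-N} ∫_{B(x,r)} Ṽ(y) dy` tends to `0` as `r → 0⁺` and to `+∞` as `r → +∞`,
where `Ṽ(y) = |y|^β / (1 + |y|^α)`. Consequently the set
`{r > 0 : f_x(r) ≤ 1}` is nonempty and bounded above, and its supremum is positive
(so the Agmon-type function `m(x)` satisfies `0 < m(x) < ∞`). -/
theorem agmon_fx_behaviour (N : ℕ) (hN : 2 < N) (α β : ℝ) (hα : 2 < α) (hβ : α - 2 < β)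
    (x : EuclideanSpace ℝ (Fin N)) :
    Tendsto (fun r : ℝ => r ^ (2 - (N : ℝ)) *
        ∫ y in Metric.ball x r, ‖y‖ ^ β / (1 + ‖y‖ ^ α)) (nhdsWithin 0 (Set.Ioi 0)) (nhds 0)
    ∧ Tendsto (fun r : ℝ => r ^ (2 - (N : ℝ)) *
        ∫ y in Metric.ball x r, ‖y‖ ^ β / (1 + ‖y‖ ^ α)) atTop atTop
    ∧ {r : ℝ | 0 < r ∧
        r ^ (2 - (N : ℝ)) * ∫ y in Metric.ball x r, ‖y‖ ^ β / (1 + ‖y‖ ^ α) ≤ 1}.Nonempty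
    ∧ BddAbove {r : ℝ | 0 < r ∧
        r ^ (2 - (N : ℝ)) * ∫ y in Metric.ball x r, ‖y‖ ^ β / (1 + ‖y‖ ^ α) ≤ 1}
    ∧ 0 < sSup {r : ℝ | 0 < r ∧
        r ^ (2 - (N : ℝ)) * ∫ y in Metric.ball x r, ‖y‖ ^ β / (1 + ‖y‖ ^ α) ≤ 1} := by
  have hβ0 : 0 < β := by linarith
  set V : EuclideanSpace ℝ (Fin N) → ℝ := fun y => ‖y‖ ^ β / (1 + ‖y‖ ^ α) with hVdef
  set f : ℝ → ℝ := fun r => r ^ (2 - (N : ℝ)) * ∫ y in ball x r, V y with hfdef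
  have hVnn : ∀ y, 0 ≤ V y := fun y =>
    div_nonneg (rpow_nonneg (norm_nonneg _) _) (by positivity)
  have hVcont : Continuous V := by
    apply Continuous.div
    · exact continuous_norm.rpow_const (fun y => Or.inr hβ0.le)
    · exact continuous_const.add (continuous_norm.rpow_const (fun y => Or.inr (by linarith)))
    · intro y; positivity
  have hInt : ∀ (z : EuclideanSpace ℝ (Fin N)) (r : ℝ), IntegrableOn V (ball z r) := fun z r =>
    (ContinuousOn.integrableOn_compact (isCompact_closedBall z r)
      hVcont.continuousOn).mono_set ball_subset_closedBall
  have hgnn : ∀ r : ℝ, 0 ≤ ∫ y in ball x r, V y := fun r =>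
    setIntegral_nonneg measurableSet_ball fun y _ => hVnn y
  set v₁ : ℝ := (volume (ball (0 : EuclideanSpace ℝ (Fin N)) 1)).toReal with hv₁def
  have hv₁ : 0 < v₁ :=
    ENNReal.toReal_pos (measure_ball_pos volume 0 one_pos).ne' measure_ball_lt_top.ne
  haveI : Nontrivial (EuclideanSpace ℝ (Fin N)) :=
    Module.nontrivial_of_finrank_pos (R := ℝ) (by rw [finrank_euclideanSpace_fin]; omega)
  have hvol : ∀ (z : EuclideanSpace ℝ (Fin N)) (r : ℝ), 0 ≤ r →
      (volume (ball z r)).toReal = r ^ N * v₁ := by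
    intro z r hr
    rw [Measure.addHaar_ball volume z hr, ENNReal.toReal_mul,
      ENNReal.toReal_ofReal (pow_nonneg hr _), finrank_euclideanSpace_fin]
  -- Part 1: limit 0 as r → 0⁺
  have h1 : Tendsto f (nhdsWithin 0 (Set.Ioi 0)) (nhds 0) := by
    set M : ℝ := ‖x‖ + 1 with hM
    have key : ∀ r ∈ Set.Ioo (0:ℝ) 1, f r ≤ (M ^ β * v₁) * r ^ 2 := by
      intro r hr
      have hr0 : 0 < r := hr.1
      have hVub : ∀ y ∈ ball x r, V y ≤ M ^ β := by
        intro y hy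
        have h1 : ‖y‖ ≤ M := by
          have h2 : dist y x < r := mem_ball.mp hy
          have h3 : ‖y‖ - ‖x‖ ≤ dist y x := by
            rw [dist_eq_norm]; exact norm_sub_norm_le y x
          have : ‖y‖ ≤ ‖x‖ + r := by linarith
          linarith [hr.2]
        calc V y ≤ ‖y‖ ^ β := by
              apply div_le_self (rpow_nonneg (norm_nonneg _) _)
              have : (0:ℝ) ≤ ‖y‖ ^ α := rpow_nonneg (norm_nonneg _) _
              linarith
          _ ≤ M ^ β := rpow_le_rpow (norm_nonneg _) h1 hβ0.le
      have hg : (∫ y in ball x r, V y) ≤ M ^ β * (r ^ N * v₁) := by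
        have h := setIntegral_mono_on (hInt x r)
          (integrableOn_const measure_ball_lt_top.ne) measurableSet_ball hVub
        rwa [setIntegral_const, smul_eq_mul, measureReal_def, hvol x r hr0.le, mul_comm] at h
      have hpow : r ^ (2 - (N:ℝ)) * (r:ℝ) ^ N = r ^ 2 := by
        rw [← Real.rpow_natCast r N, ← Real.rpow_add hr0,
          show (2 : ℝ) - (N:ℝ) + (N:ℝ) = ((2:ℕ):ℝ) by push_cast; ring, Real.rpow_natCast]
      calc f r = r ^ (2 - (N:ℝ)) * ∫ y in ball x r, V y := rfl
        _ ≤ r ^ (2 - (N:ℝ)) * (M ^ β * (r ^ N * v₁)) :=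
            mul_le_mul_of_nonneg_left hg (rpow_nonneg hr0.le _)
        _ = (M ^ β * v₁) * (r ^ (2 - (N:ℝ)) * (r:ℝ) ^ N) := by ring
        _ = (M ^ β * v₁) * r ^ 2 := by rw [hpow]
    have hquad : Tendsto (fun r : ℝ => (M ^ β * v₁) * r ^ 2)
        (nhdsWithin 0 (Set.Ioi 0)) (nhds 0) := by
      have hc : Continuous (fun r : ℝ => (M ^ β * v₁) * r ^ 2) :=
        continuous_const.mul (continuous_pow 2)
      have := (hc.tendsto 0).mono_left (nhdsWithin_le_nhds (s := Set.Ioi (0:ℝ)))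
      simpa using this
    refine squeeze_zero' ?_ ?_ hquad
    · filter_upwards [self_mem_nhdsWithin] with r hr
      exact mul_nonneg (rpow_nonneg (le_of_lt hr) _) (hgnn r)
    · filter_upwards [Ioo_mem_nhdsGT_of_mem (by simp : (0:ℝ) ∈ Set.Ico (0:ℝ) 1)] with r hr
      exact key r hr
  -- Part 2: limit +∞ as r → ∞
  have h2 : Tendsto f atTop atTop := by
    set e : EuclideanSpace ℝ (Fin N) := EuclideanSpace.single ⟨0, by omega⟩ (1:ℝ) with he
    have hne : ‖e‖ = 1 := by rw [he, EuclideanSpace.norm_single]; norm_num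
    set C : ℝ := (4 : ℝ) ^ (-β) / 2 * v₁ / 8 ^ N with hC
    have hCpos : 0 < C := by
      have : (0:ℝ) < (4:ℝ) ^ (-β) := Real.rpow_pos_of_pos (by norm_num) _
      positivity
    have key : ∀ r : ℝ, max 2 (4 * ‖x‖) ≤ r → C * r ^ (β - α + 2) ≤ f r := by
      intro r hr
      have hr2 : (2:ℝ) ≤ r := le_trans (le_max_left _ _) hr
      have hrx : 4 * ‖x‖ ≤ r := le_trans (le_max_right _ _) hr
      have hr0 : (0:ℝ) < r := by linarith
      set z : EuclideanSpace ℝ (Fin N) := (3 * r / 8) • e with hz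
      have hnz : ‖z‖ = 3 * r / 8 := by
        rw [hz, norm_smul, hne, mul_one, Real.norm_eq_abs, abs_of_nonneg (by linarith)]
      have hsub : ball z (r / 8) ⊆ ball x r := by
        intro y hy
        have hy' : dist y z < r / 8 := mem_ball.mp hy
        have h3 : dist y x ≤ dist y z + dist z x := dist_triangle y z x
        have h4 : dist z x ≤ ‖z‖ + ‖x‖ := dist_le_norm_add_norm z x
        refine mem_ball.mpr ?_
        rw [hnz] at h4
        linarith
      have hVlb : ∀ y ∈ ball z (r / 8), (4:ℝ) ^ (-β) / 2 * r ^ (β - α) ≤ V y := by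
        intro y hy
        have hy' : dist y z < r / 8 := mem_ball.mp hy
        have hzy : ‖z‖ - ‖y‖ ≤ dist y z := by
          rw [dist_comm, dist_eq_norm]; exact norm_sub_norm_le z y
        have hyz : ‖y‖ - ‖z‖ ≤ dist y z := by
          rw [dist_eq_norm]; exact norm_sub_norm_le y z
        have hyl : r / 4 ≤ ‖y‖ := by rw [hnz] at hzy; linarith
        have hyu : ‖y‖ ≤ r := by rw [hnz] at hyz; linarith
        have hnum : (4:ℝ) ^ (-β) * r ^ β ≤ ‖y‖ ^ β := by
          have h4 : (4:ℝ) ^ (-β) * r ^ β = (r / 4) ^ β := by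
            rw [Real.div_rpow hr0.le (by norm_num : (0:ℝ) ≤ 4),
              Real.rpow_neg (by norm_num : (0:ℝ) ≤ 4)]
            ring
          rw [h4]
          exact rpow_le_rpow (by positivity) hyl hβ0.le
        have hden : 1 + ‖y‖ ^ α ≤ 2 * r ^ α := by
          have h5 : ‖y‖ ^ α ≤ r ^ α := rpow_le_rpow (norm_nonneg _) hyu (by linarith)
          have h6 : (1:ℝ) ≤ r ^ α := Real.one_le_rpow (by linarith) (by linarith)
          linarith
        have hdenpos : (0:ℝ) < 1 + ‖y‖ ^ α := by positivity
        calc (4:ℝ) ^ (-β) / 2 * r ^ (β - α) = ((4:ℝ) ^ (-β) * r ^ β) / (2 * r ^ α) := by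
              rw [Real.rpow_sub hr0]; ring
          _ ≤ ‖y‖ ^ β / (1 + ‖y‖ ^ α) :=
              div_le_div₀ (rpow_nonneg (norm_nonneg _) _) hnum hdenpos hden
          _ = V y := rfl
      have hconst : ((4:ℝ) ^ (-β) / 2 * r ^ (β - α)) * ((r / 8) ^ N * v₁) ≤
          ∫ y in ball z (r / 8), V y := by
        have h := setIntegral_mono_on (integrableOn_const measure_ball_lt_top.ne)
          (hInt z (r / 8)) measurableSet_ball hVlb
        rwa [setIntegral_const, smul_eq_mul, measureReal_def, hvol z (r / 8) (by positivity), mul_comm] at h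
      have hmono : (∫ y in ball z (r / 8), V y) ≤ ∫ y in ball x r, V y :=
        setIntegral_mono_set (hInt x r) (ae_of_all _ fun y => hVnn y) hsub.eventuallyLE
      have hg : ((4:ℝ) ^ (-β) / 2 * r ^ (β - α)) * ((r / 8) ^ N * v₁) ≤
          ∫ y in ball x r, V y := hconst.trans hmono
      have e1 : (r:ℝ) ^ N = r ^ ((N:ℝ)) := (Real.rpow_natCast r N).symm
      have e2 : r ^ (2 - (N:ℝ)) * r ^ ((N:ℝ)) * r ^ (β - α) = r ^ (β - α + 2) := by
        rw [← Real.rpow_add hr0, ← Real.rpow_add hr0]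
        congr 1; ring
      calc C * r ^ (β - α + 2)
          = ((4:ℝ) ^ (-β) / 2 * v₁ / 8 ^ N) * (r ^ (2 - (N:ℝ)) * r ^ ((N:ℝ)) * r ^ (β - α)) := by
            rw [e2, hC]
        _ = r ^ (2 - (N:ℝ)) * (((4:ℝ) ^ (-β) / 2 * r ^ (β - α)) * ((r / 8) ^ N * v₁)) := by
            rw [div_pow, e1]; ring
        _ ≤ r ^ (2 - (N:ℝ)) * ∫ y in ball x r, V y :=
            mul_le_mul_of_nonneg_left hg (rpow_nonneg hr0.le _)
        _ = f r := rfl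
    have hlow : Tendsto (fun r : ℝ => C * r ^ (β - α + 2)) atTop atTop :=
      (tendsto_rpow_atTop (by linarith)).const_mul_atTop hCpos
    apply tendsto_atTop_mono' atTop ?_ hlow
    filter_upwards [eventually_ge_atTop (max 2 (4 * ‖x‖))] with r hr
    exact key r hr
  -- Parts 3–5
  have hS : {r : ℝ | 0 < r ∧ f r ≤ 1}.Nonempty := by
    have hmem : ∀ᶠ r in nhdsWithin 0 (Set.Ioi 0), f r < 1 := h1 (Iio_mem_nhds one_pos)
    obtain ⟨r, hr1, hr2⟩ := (hmem.and eventually_mem_nhdsWithin).exists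
    exact ⟨r, hr2, hr1.le⟩
  have hB : BddAbove {r : ℝ | 0 < r ∧ f r ≤ 1} := by
    obtain ⟨R, hR⟩ := eventually_atTop.mp (h2.eventually (eventually_gt_atTop 1))
    refine ⟨R, fun r hr => ?_⟩
    by_contra h
    push_neg at h
    exact absurd hr.2 (not_le.mpr (hR r h.le))
  obtain ⟨r₀, hr₀⟩ := id hS
  have hpos : 0 < sSup {r : ℝ | 0 < r ∧ f r ≤ 1} :=
    lt_of_lt_of_le hr₀.1 (le_csSup hB hr₀)
  exact ⟨h1, h2, hS, hB, hpos⟩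
end

section
/- Let N > 2 be an integer, α > 2 and α − 2 < β < α. For x ∈ ℝ^N let R(x) = sup{ r > 0 : r^{2−N}∫_{B(x,r)} Ṽ(y) dy ≤ 1 }. Then there exists a constant C = C(α, β, N) > 0 such that R(x) ≤ C (1 + |x|)^{(α−β)/2} for all x ∈ ℝ^N; equivalently, the Agmon-type function m(x) = 1/R(x) satisfies m(x) ≥ C' (1 + |x|)^{(β−α)/2} for some constant C' > 0. -/
open Real MeasureTheory

lemma sq_rpow_half {M : ℝ} (hM : 0 ≤ M) : (M ^ ((1 : ℝ) / 2)) ^ 2 = M := by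
  rw [← Real.rpow_natCast (M ^ ((1 : ℝ) / 2)) 2, ← Real.rpow_mul hM]
  norm_num

lemma rpow_half_sq {s : ℝ} (hs : 0 ≤ s) (g : ℝ) : (s ^ (g / 2)) ^ 2 = s ^ g := by
  rw [← Real.rpow_natCast (s ^ (g / 2)) 2, ← Real.rpow_mul hs]
  congr 1
  push_cast
  ring

lemma le_of_sq_le_sq'' {r X : ℝ} (hr : 0 < r) (hX : 0 < X) (h : r ^ 2 ≤ X ^ 2) : r ≤ X := by
  nlinarith

lemma exists_outer_point (N : ℕ) (hN : 0 < N) (x : EuclideanSpace ℝ (Fin N)) (r : ℝ)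
    (hr : 0 < r) : ∃ z : EuclideanSpace ℝ (Fin N), ‖z - x‖ = r / 2 ∧ ‖z‖ = ‖x‖ + r / 2 := by
  rcases eq_or_ne x 0 with rfl | hx
  · refine ⟨(r / 2) • EuclideanSpace.single (⟨0, hN⟩ : Fin N) (1 : ℝ), ?_, ?_⟩
    · rw [sub_zero, norm_smul, EuclideanSpace.norm_single, norm_one, mul_one,
        Real.norm_eq_abs, abs_of_pos (by positivity)]
    · rw [norm_smul, EuclideanSpace.norm_single, norm_one, mul_one,
        Real.norm_eq_abs, abs_of_pos (by positivity), norm_zero, zero_add]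
  · have hxn : (0 : ℝ) < ‖x‖ := norm_pos_iff.mpr hx
    refine ⟨(1 + (r / 2) / ‖x‖) • x, ?_, ?_⟩
    · have e : ((1 + (r / 2) / ‖x‖) • x) - x = ((r / 2) / ‖x‖) • x := by
        rw [add_smul, one_smul, add_sub_cancel_left]
      rw [e, norm_smul, Real.norm_eq_abs, abs_of_nonneg (by positivity),
        div_mul_cancel₀ _ hxn.ne']
    · rw [norm_smul, Real.norm_eq_abs, abs_of_nonneg (by positivity), add_mul, one_mul,
        div_mul_cancel₀ _ hxn.ne', add_comm]

set_option maxHeartbeats 1600000 in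
/-- For `N > 2`, `α > 2` and `α - 2 < β < α`, setting
`R(x) = sup { r > 0 : r^{2-N} ∫_{B(x,r)} Ṽ(y) dy ≤ 1 }` with `Ṽ(y) = |y|^β/(1+|y|^α)`,
there exists `C = C(α, β, N) > 0` such that `R(x) ≤ C (1 + |x|)^{(α-β)/2}` for all `x`,
i.e. the Agmon-type function `m(x) = 1/R(x)` satisfies
`m(x) ≥ C' (1+|x|)^{(β-α)/2}`. -/
theorem agmon_R_upper_bound_subcritical (N : ℕ) (hN : 2 < N) (α β : ℝ)
    (hα : 2 < α) (hβ₁ : α - 2 < β) (hβ₂ : β < α) :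
    ∃ C : ℝ, 0 < C ∧ ∀ x : EuclideanSpace ℝ (Fin N),
      sSup {r : ℝ | 0 < r ∧
          r ^ (2 - (N : ℝ)) * ∫ y in Metric.ball x r, ‖y‖ ^ β / (1 + ‖y‖ ^ α) ≤ 1}
        ≤ C * (1 + ‖x‖) ^ ((α - β) / 2) := by
  have hβ0 : (0 : ℝ) < β := by linarith
  have hα0 : (0 : ℝ) < α := by linarith
  have hδ : (0 : ℝ) < 2 + β - α := by linarith
  haveI : Nontrivial (EuclideanSpace ℝ (Fin N)) :=
    Module.nontrivial_of_finrank_pos (R := ℝ) (by rw [finrank_euclideanSpace_fin]; omega)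
  have hVcont : Continuous (fun y : EuclideanSpace ℝ (Fin N) => ‖y‖ ^ β / (1 + ‖y‖ ^ α)) := by
    apply Continuous.div
    · exact continuous_norm.rpow_const (fun y => Or.inr hβ0.le)
    · exact continuous_const.add (continuous_norm.rpow_const (fun y => Or.inr hα0.le))
    · intro y; positivity
  have hVnn : ∀ y : EuclideanSpace ℝ (Fin N), 0 ≤ ‖y‖ ^ β / (1 + ‖y‖ ^ α) := by
    intro y; positivity
  have hVint : ∀ (c : EuclideanSpace ℝ (Fin N)) (ρ : ℝ),
      IntegrableOn (fun y : EuclideanSpace ℝ (Fin N) => ‖y‖ ^ β / (1 + ‖y‖ ^ α))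
        (Metric.ball c ρ) volume :=
    fun c ρ => ((hVcont.continuousOn).integrableOn_compact
      (isCompact_closedBall c ρ)).mono_set Metric.ball_subset_closedBall
  have hvol : ∀ (z : EuclideanSpace ℝ (Fin N)) (ρ : ℝ), 0 ≤ ρ →
      (volume (Metric.ball z ρ)).toReal
        = ρ ^ N * (volume (Metric.ball (0 : EuclideanSpace ℝ (Fin N)) 1)).toReal := by
    intro z ρ hρ
    rw [Measure.addHaar_ball (μ := volume) z hρ, ENNReal.toReal_mul,
      ENNReal.toReal_ofReal (by positivity), finrank_euclideanSpace_fin]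
  obtain ⟨ω, hωdef⟩ : ∃ w : ℝ, w = (volume (Metric.ball (0 : EuclideanSpace ℝ (Fin N)) 1)).toReal :=
    ⟨_, rfl⟩
  rw [← hωdef] at hvol
  have hω : 0 < ω := by
    rw [hωdef]
    exact ENNReal.toReal_pos (Metric.measure_ball_pos volume 0 one_pos).ne'
      measure_ball_lt_top.ne
  have hfour : (0 : ℝ) < 4 ^ (N : ℝ) := by positivity
  obtain ⟨τ, hτdef⟩ : ∃ t : ℝ, t = ω / 4 ^ (N : ℝ) := ⟨_, rfl⟩
  have hτ : 0 < τ := hτdef ▸ div_pos hω hfour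
  obtain ⟨K₁, hK₁def⟩ : ∃ k : ℝ, k = (2 * 3 ^ α * 2 ^ β / τ) ^ ((1 : ℝ) / 2) := ⟨_, rfl⟩
  obtain ⟨K₂, hK₂def⟩ : ∃ k : ℝ, k = (2 * (3 / 2) ^ α * 4 ^ β / τ) ^ (1 / (2 + β - α)) := ⟨_, rfl⟩
  have hM₁ : (0 : ℝ) < 2 * 3 ^ α * 2 ^ β / τ := by positivity
  have hM₂ : (0 : ℝ) < 2 * (3 / 2) ^ α * 4 ^ β / τ := by positivity
  have hK₁ : 0 < K₁ := hK₁def ▸ Real.rpow_pos_of_pos hM₁ _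
  have hK₂ : 0 < K₂ := hK₂def ▸ Real.rpow_pos_of_pos hM₂ _
  refine ⟨4 + K₁ + K₂, by linarith, fun x => ?_⟩
  set s : ℝ := 1 + ‖x‖ with hsdef
  have hxnn : (0 : ℝ) ≤ ‖x‖ := norm_nonneg x
  have hs1 : (1 : ℝ) ≤ s := by rw [hsdef]; linarith
  have hs0 : (0 : ℝ) < s := by linarith
  have hγ : (0 : ℝ) ≤ (α - β) / 2 := by linarith
  have hsγ0 : (0 : ℝ) < s ^ ((α - β) / 2) := Real.rpow_pos_of_pos hs0 _
  have hsγ : (1 : ℝ) ≤ s ^ ((α - β) / 2) := by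
    calc (1 : ℝ) = 1 ^ ((α - β) / 2) := (Real.one_rpow _).symm
      _ ≤ s ^ ((α - β) / 2) := Real.rpow_le_rpow zero_le_one hs1 hγ
  apply Real.sSup_le _ (mul_nonneg (by linarith) hsγ0.le)
  rintro r ⟨hr0, hint⟩
  obtain ⟨z, hz1, hz2⟩ := exists_outer_point N (by omega) x r hr0
  have hsub : Metric.ball z (r / 4) ⊆ Metric.ball x r := by
    intro y hy
    rw [Metric.mem_ball] at hy ⊢
    have h1 : dist y x ≤ dist y z + dist z x := dist_triangle y z x
    have h2 : dist z x = r / 2 := by rw [dist_eq_norm, hz1]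
    linarith
  set A : ℝ := (‖x‖ + r / 4) ^ β with hAdef
  set D : ℝ := 1 + (‖x‖ + r) ^ α with hDdef
  have hApos : 0 < A := Real.rpow_pos_of_pos (by linarith) _
  have hDpos : 0 < D := by rw [hDdef]; positivity
  have hlow : ∀ y ∈ Metric.ball z (r / 4), A / D ≤ ‖y‖ ^ β / (1 + ‖y‖ ^ α) := by
    intro y hy
    rw [Metric.mem_ball, dist_eq_norm] at hy
    have hzy : ‖z‖ - ‖y‖ ≤ ‖y - z‖ := by
      have h := norm_sub_norm_le z y
      rwa [norm_sub_rev] at h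
    have hyz : ‖y‖ - ‖z‖ ≤ ‖y - z‖ := norm_sub_norm_le y z
    have h1 : ‖x‖ + r / 4 ≤ ‖y‖ := by linarith
    have h2 : ‖y‖ ≤ ‖x‖ + r := by linarith
    have h3 : A ≤ ‖y‖ ^ β := Real.rpow_le_rpow (by linarith) h1 hβ0.le
    have h4 : 1 + ‖y‖ ^ α ≤ D := by
      have := Real.rpow_le_rpow (norm_nonneg y) h2 hα0.le
      rw [hDdef]; linarith
    exact div_le_div₀ (Real.rpow_nonneg (norm_nonneg y) β) h3 (by positivity) h4
  set I : ℝ := ∫ y in Metric.ball x r, ‖y‖ ^ β / (1 + ‖y‖ ^ α) with hIdef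
  have hchain : A / D * ((r / 4) ^ N * ω) ≤ I := by
    have e1 : A / D * ((r / 4) ^ N * ω) = ∫ _ in Metric.ball z (r / 4), A / D := by
      rw [setIntegral_const, measureReal_def, hvol z (r / 4) (by positivity), smul_eq_mul]; ring
    rw [e1]
    calc ∫ _ in Metric.ball z (r / 4), A / D
        ≤ ∫ y in Metric.ball z (r / 4), ‖y‖ ^ β / (1 + ‖y‖ ^ α) :=
          setIntegral_mono_on (integrableOn_const measure_ball_lt_top.ne)
            (hVint z (r / 4)) measurableSet_ball hlow
      _ ≤ I := setIntegral_mono_set (hVint x r)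
          (Filter.Eventually.of_forall fun y => hVnn y) (HasSubset.Subset.eventuallyLE hsub)
  have hPpos : (0 : ℝ) < r ^ ((N : ℝ) - 2) := Real.rpow_pos_of_pos hr0 _
  have hIle : I ≤ r ^ ((N : ℝ) - 2) := by
    have hrp : (0 : ℝ) < r ^ (2 - (N : ℝ)) := Real.rpow_pos_of_pos hr0 _
    have e' : r ^ (2 - (N : ℝ)) * r ^ ((N : ℝ) - 2) = 1 := by
      rw [← Real.rpow_add hr0, show (2 - (N : ℝ)) + ((N : ℝ) - 2) = 0 by ring, Real.rpow_zero]
    exact le_of_mul_le_mul_left (by rw [e']; exact hint) hrp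
  have hr2 : r ^ (2 : ℝ) = r ^ 2 := by
    rw [show (2 : ℝ) = ((2 : ℕ) : ℝ) by norm_num, Real.rpow_natCast]
  have hrN : ((r / 4 : ℝ)) ^ N = r ^ ((N : ℝ) - 2) * r ^ 2 / 4 ^ (N : ℝ) := by
    rw [← Real.rpow_natCast (r / 4) N, Real.div_rpow hr0.le (by norm_num), ← hr2,
      ← Real.rpow_add hr0]
    norm_num
  have keyStar : A * r ^ 2 * τ ≤ D := by
    rw [hrN] at hchain
    have h2 : A / D * (r ^ 2 * τ) * r ^ ((N : ℝ) - 2) ≤ 1 * r ^ ((N : ℝ) - 2) := by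
      calc A / D * (r ^ 2 * τ) * r ^ ((N : ℝ) - 2)
          = A / D * (r ^ ((N : ℝ) - 2) * r ^ 2 / 4 ^ (N : ℝ) * ω) := by rw [hτdef]; ring
        _ ≤ I := hchain
        _ ≤ 1 * r ^ ((N : ℝ) - 2) := by rw [one_mul]; exact hIle
    have h3 := le_of_mul_le_mul_right h2 hPpos
    have h4 : (A * r ^ 2 * τ) / D ≤ 1 := by
      calc (A * r ^ 2 * τ) / D = A / D * (r ^ 2 * τ) := by ring
        _ ≤ 1 := h3
    exact (div_le_one hDpos).mp h4
  have hxs : ‖x‖ = s - 1 := by rw [hsdef]; ring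
  rcases le_or_gt r (2 * s) with hcase | hcase
  · rcases le_or_gt s 2 with hs2 | hs2
    · -- r ≤ 2s ≤ 4
      calc r ≤ 4 * 1 := by linarith
        _ ≤ 4 * s ^ ((α - β) / 2) := mul_le_mul_of_nonneg_left hsγ (by norm_num)
        _ ≤ (4 + K₁ + K₂) * s ^ ((α - β) / 2) :=
            mul_le_mul_of_nonneg_right (by linarith) hsγ0.le
    · -- 2 < s, r ≤ 2s
      have hA2 : (s / 2) ^ β ≤ A :=
        Real.rpow_le_rpow (by positivity) (by rw [hxs]; linarith) hβ0.le
      have hD2 : D ≤ 2 * 3 ^ α * s ^ α := by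
        have h1 : ‖x‖ + r ≤ 3 * s := by rw [hxs]; linarith
        have h2 : (‖x‖ + r) ^ α ≤ ((3 : ℝ) * s) ^ α :=
          Real.rpow_le_rpow (by linarith) h1 hα0.le
        have h3 : ((3 : ℝ) * s) ^ α = 3 ^ α * s ^ α := Real.mul_rpow (by norm_num) hs0.le
        have h4 : (1 : ℝ) ≤ ((3 : ℝ) * s) ^ α := by
          calc (1 : ℝ) = 1 ^ α := (Real.one_rpow α).symm
            _ ≤ ((3 : ℝ) * s) ^ α := Real.rpow_le_rpow zero_le_one (by linarith) hα0.le
        rw [hDdef]; rw [h3] at h2 h4; linarith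
      have h5 : (s / 2) ^ β * r ^ 2 * τ ≤ 2 * 3 ^ α * s ^ α :=
        le_trans (mul_le_mul_of_nonneg_right
          (mul_le_mul_of_nonneg_right hA2 (sq_nonneg r)) hτ.le) (keyStar.trans hD2)
      have h2β : (0 : ℝ) < 2 ^ β := by positivity
      have h8 : s ^ β * r ^ 2 * τ ≤ 2 * 3 ^ α * s ^ α * 2 ^ β := by
        have h5' := mul_le_mul_of_nonneg_right h5 h2β.le
        have e : (s / 2) ^ β * r ^ 2 * τ * 2 ^ β = s ^ β * r ^ 2 * τ := by
          rw [Real.div_rpow hs0.le (by norm_num : (0:ℝ) ≤ 2)]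
          field_simp
        rwa [e] at h5'
      have hsβ : (0 : ℝ) < s ^ β := Real.rpow_pos_of_pos hs0 β
      have h7 : r ^ 2 ≤ 2 * 3 ^ α * 2 ^ β / τ * s ^ (α - β) := by
        rw [Real.rpow_sub hs0, div_mul_div_comm, le_div_iff₀ (by positivity)]
        calc r ^ 2 * (τ * s ^ β) = s ^ β * r ^ 2 * τ := by ring
          _ ≤ 2 * 3 ^ α * s ^ α * 2 ^ β := h8
          _ = 2 * 3 ^ α * 2 ^ β * s ^ α := by ring
      have hX : (0 : ℝ) < K₁ * s ^ ((α - β) / 2) := mul_pos hK₁ hsγ0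
      have e1 : K₁ ^ 2 = 2 * 3 ^ α * 2 ^ β / τ := by
        rw [hK₁def]; exact sq_rpow_half hM₁.le
      have e2 : (s ^ ((α - β) / 2)) ^ 2 = s ^ (α - β) := rpow_half_sq hs0.le _
      have h9 : r ^ 2 ≤ (K₁ * s ^ ((α - β) / 2)) ^ 2 := by
        calc r ^ 2 ≤ 2 * 3 ^ α * 2 ^ β / τ * s ^ (α - β) := h7
          _ = (K₁ * s ^ ((α - β) / 2)) ^ 2 := by rw [mul_pow, e1, e2]
      have h10 : r ≤ K₁ * s ^ ((α - β) / 2) := le_of_sq_le_sq'' hr0 hX h9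
      calc r ≤ K₁ * s ^ ((α - β) / 2) := h10
        _ ≤ (4 + K₁ + K₂) * s ^ ((α - β) / 2) :=
            mul_le_mul_of_nonneg_right (by linarith) hsγ0.le
  · -- 2s < r
    have hA2 : (r / 4) ^ β ≤ A :=
      Real.rpow_le_rpow (by positivity) (by linarith) hβ0.le
    have hD2 : D ≤ 2 * (3 / 2) ^ α * r ^ α := by
      have h1 : ‖x‖ + r ≤ 3 / 2 * r := by rw [hxs]; linarith
      have h2 : (‖x‖ + r) ^ α ≤ ((3 : ℝ) / 2 * r) ^ α :=
        Real.rpow_le_rpow (by linarith) h1 hα0.le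
      have h3 : ((3 : ℝ) / 2 * r) ^ α = (3 / 2) ^ α * r ^ α :=
        Real.mul_rpow (by norm_num) hr0.le
      have h4 : (1 : ℝ) ≤ ((3 : ℝ) / 2 * r) ^ α := by
        calc (1 : ℝ) = 1 ^ α := (Real.one_rpow α).symm
          _ ≤ ((3 : ℝ) / 2 * r) ^ α := Real.rpow_le_rpow zero_le_one (by linarith) hα0.le
      rw [hDdef]; rw [h3] at h2 h4; linarith
    have h5 : (r / 4) ^ β * r ^ 2 * τ ≤ 2 * (3 / 2) ^ α * r ^ α :=
      le_trans (mul_le_mul_of_nonneg_right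
        (mul_le_mul_of_nonneg_right hA2 (sq_nonneg r)) hτ.le) (keyStar.trans hD2)
    have h4β : (0 : ℝ) < 4 ^ β := by positivity
    have h8 : r ^ β * r ^ 2 * τ ≤ 2 * (3 / 2) ^ α * r ^ α * 4 ^ β := by
      have h5' := mul_le_mul_of_nonneg_right h5 h4β.le
      have e : (r / 4) ^ β * r ^ 2 * τ * 4 ^ β = r ^ β * r ^ 2 * τ := by
        rw [Real.div_rpow hr0.le (by norm_num : (0:ℝ) ≤ 4)]
        field_simp
      rwa [e] at h5'
    have h7 : r ^ (2 + β - α) ≤ 2 * (3 / 2) ^ α * 4 ^ β / τ := by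
      have e : r ^ (2 + β - α) = r ^ β * r ^ 2 / r ^ α := by
        rw [Real.rpow_sub hr0, Real.rpow_add hr0, hr2]
        ring
      rw [e, div_le_div_iff₀ (Real.rpow_pos_of_pos hr0 α) hτ]
      calc r ^ β * r ^ 2 * τ ≤ 2 * (3 / 2) ^ α * r ^ α * 4 ^ β := h8
        _ = 2 * (3 / 2) ^ α * 4 ^ β * r ^ α := by ring
    have h9 : r ≤ K₂ := by
      have e : (r ^ (2 + β - α)) ^ (1 / (2 + β - α)) = r := by
        rw [← Real.rpow_mul hr0.le, mul_one_div, div_self hδ.ne', Real.rpow_one]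
      calc r = (r ^ (2 + β - α)) ^ (1 / (2 + β - α)) := e.symm
        _ ≤ (2 * (3 / 2) ^ α * 4 ^ β / τ) ^ (1 / (2 + β - α)) :=
            Real.rpow_le_rpow (Real.rpow_nonneg hr0.le _) h7 (by positivity)
        _ = K₂ := hK₂def.symm
    calc r ≤ K₂ * 1 := by linarith
      _ ≤ K₂ * s ^ ((α - β) / 2) := mul_le_mul_of_nonneg_left hsγ hK₂.le
      _ ≤ (4 + K₁ + K₂) * s ^ ((α - β) / 2) :=
          mul_le_mul_of_nonneg_right (by linarith) hsγ0.le
end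

section
/- Let N > 2 be an integer, α > 2 and β ≥ α. For x ∈ ℝ^N let R(x) = sup{ r > 0 : r^{2−N}∫_{B(x,r)} Ṽ(y) dy ≤ 1 }. Then there exists a constant C = C(α, β, N) > 0 such that R(x) ≤ C (1 + |x|)^{(α−β)/2} for all x ∈ ℝ^N; equivalently, the Agmon-type function m(x) = 1/R(x) satisfies m(x) ≥ C' (1 + |x|)^{(β−α)/2} for some constant C' > 0. -/
open Real MeasureTheory Metric

lemma agmon_Vcont {E : Type*} [NormedAddCommGroup E] {α β : ℝ} (hα : 0 ≤ α) (hβ : 0 ≤ β) :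
    Continuous fun y : E => ‖y‖ ^ β / (1 + ‖y‖ ^ α) := by
  apply Continuous.div
  · exact continuous_norm.rpow_const fun y => Or.inr hβ
  · exact continuous_const.add (continuous_norm.rpow_const fun y => Or.inr hα)
  · intro y
    have : (0:ℝ) < 1 + ‖y‖ ^ α := by positivity
    exact this.ne'

lemma agmon_geom (N : ℕ) (hN : 0 < N) (x : EuclideanSpace ℝ (Fin N)) {r : ℝ} (hr : 0 < r) :
    ∃ z : EuclideanSpace ℝ (Fin N), ball z (r/4) ⊆ ball x r ∧
      ∀ y ∈ ball z (r/4), ‖x‖ + r/4 ≤ ‖y‖ := by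
  obtain ⟨z, hz1, hz2⟩ : ∃ z : EuclideanSpace ℝ (Fin N), ‖z‖ = ‖x‖ + r/2 ∧ dist z x = r/2 := by
    by_cases hx : x = 0
    · refine ⟨(r/2) • EuclideanSpace.single (⟨0, hN⟩ : Fin N) (1:ℝ), ?_, ?_⟩
      · rw [hx]
        simp [norm_smul, abs_of_pos hr]
      · rw [hx, dist_zero_right]
        simp [norm_smul, abs_of_pos hr]
    · have hx' : (0:ℝ) < ‖x‖ := norm_pos_iff.2 hx
      refine ⟨(1 + r/(2*‖x‖)) • x, ?_, ?_⟩
      · rw [norm_smul, Real.norm_eq_abs, abs_of_pos (by positivity)]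
        field_simp
      · have : (1 + r/(2*‖x‖)) • x - x = (r/(2*‖x‖)) • x := by
          rw [add_smul, one_smul]; abel
        rw [dist_eq_norm, this, norm_smul, Real.norm_eq_abs, abs_of_pos (by positivity)]
        field_simp
  refine ⟨z, ?_, ?_⟩
  · intro y hy
    rw [mem_ball] at hy ⊢
    calc dist y x ≤ dist y z + dist z x := dist_triangle y z x
      _ < r/4 + r/2 := by linarith
      _ ≤ r := by linarith
  · intro y hy
    rw [mem_ball] at hy
    have h1 : ‖z‖ - ‖y‖ ≤ ‖z - y‖ := norm_sub_norm_le z y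
    have h2 : ‖z - y‖ = dist y z := by rw [dist_eq_norm, norm_sub_rev]
    linarith [hz1 ▸ h1, h2 ▸ hy]

lemma agmon_pt1 {α β t : ℝ} (hα : 0 ≤ α) (hβ : α ≤ β) (ht : 1/2 ≤ t) :
    (1/2) ^ (β - α) / (2 ^ α + 1) ≤ t ^ β / (1 + t ^ α) := by
  have ht0 : (0:ℝ) < t := by linarith
  have h2t : (1:ℝ) ≤ 2 * t := by linarith
  have h1 : (1:ℝ) ≤ (2*t) ^ α := Real.one_le_rpow h2t hα
  have h2 : (2*t) ^ α = 2 ^ α * t ^ α := Real.mul_rpow (by norm_num) ht0.le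
  have hden : 1 + t ^ α ≤ (2 ^ α + 1) * t ^ α := by
    have := h2 ▸ h1
    nlinarith [Real.rpow_pos_of_pos ht0 α]
  have hden0 : (0:ℝ) < 1 + t ^ α := by positivity
  have hc0 : (0:ℝ) < (2:ℝ) ^ α + 1 := by positivity
  have htα : (0:ℝ) < t ^ α := Real.rpow_pos_of_pos ht0 α
  have hnum : (1/2) ^ (β - α) * t ^ α ≤ t ^ β := by
    have : (1/2:ℝ) ^ (β - α) ≤ t ^ (β - α) :=
      Real.rpow_le_rpow (by norm_num) ht (by linarith)
    calc (1/2:ℝ) ^ (β - α) * t ^ α ≤ t ^ (β - α) * t ^ α := by nlinarith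
      _ = t ^ β := by rw [← Real.rpow_add ht0]; ring_nf
  rw [div_le_div_iff₀ hc0 hden0]
  calc (1/2) ^ (β-α) * (1 + t ^ α) ≤ (1/2) ^ (β-α) * ((2 ^ α + 1) * t ^ α) := by
        have : (0:ℝ) < (1/2:ℝ) ^ (β-α) := by positivity
        nlinarith
    _ = ((1/2) ^ (β-α) * t ^ α) * (2 ^ α + 1) := by ring
    _ ≤ t ^ β * (2 ^ α + 1) := by nlinarith

lemma agmon_pt2 {α β X r t : ℝ} (hα : 2 < α) (hβ : α ≤ β) (hX : 0 ≤ X)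
    (hr1 : (1+X) ^ ((α-β)/2) ≤ r) (hr2 : r ≤ 2*(1+X))
    (ht1 : X + r/4 ≤ t) (ht2 : t ≤ X + r) :
    (min 1 ((1/4) * 2 ^ ((α-β)/2)) / 2) ^ β / (2 * 3 ^ α) * (1+X) ^ (β-α)
      ≤ t ^ β / (1 + t ^ α) := by
  have hX1 : (0:ℝ) < 1 + X := by linarith
  have hr0 : (0:ℝ) < r := lt_of_lt_of_le (Real.rpow_pos_of_pos hX1 _) hr1
  have ht0 : (0:ℝ) < t := by linarith
  set c0 : ℝ := (1/4) * 2 ^ ((α-β)/2) with hc0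
  have hc0pos : 0 < c0 := by positivity
  set c2 : ℝ := min 1 c0 / 2 with hc2
  have hc2pos : 0 < c2 := by positivity
  have hA : c2 * (1+X) ≤ t := by
    rcases le_or_gt 1 X with hx1 | hx1
    · have : (1+X)/2 ≤ X := by linarith
      have hm : min 1 c0 ≤ 1 := min_le_left _ _
      calc c2 * (1+X) = min 1 c0 * ((1+X)/2) := by rw [hc2]; ring
        _ ≤ 1 * X := mul_le_mul hm this (by linarith) (by norm_num)
        _ ≤ t := by linarith
    · have h2 : 1 + X ≤ 2 := by linarith
      have hrlow : c0 ≤ r/4 := by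
        have : (2:ℝ) ^ ((α-β)/2) ≤ (1+X) ^ ((α-β)/2) :=
          Real.rpow_le_rpow_of_nonpos hX1 h2 (by linarith)
        rw [hc0]; linarith
      have hm : min 1 c0 ≤ c0 := min_le_right _ _
      calc c2 * (1+X) ≤ c2 * 2 := by nlinarith
        _ = min 1 c0 := by rw [hc2]; ring
        _ ≤ c0 := hm
        _ ≤ r/4 := hrlow
        _ ≤ t := by linarith
  have hM : t ≤ 3*(1+X) := by linarith
  have hMb : (1:ℝ) ≤ 3*(1+X) := by linarith
  have hB1 : t ^ α ≤ (3*(1+X)) ^ α := Real.rpow_le_rpow ht0.le hM (by linarith)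
  have hB2 : (1:ℝ) ≤ (3*(1+X)) ^ α := Real.one_le_rpow hMb (by linarith)
  have hB : 1 + t ^ α ≤ 2 * (3*(1+X)) ^ α := by linarith
  have hnum : (c2*(1+X)) ^ β ≤ t ^ β :=
    Real.rpow_le_rpow (by positivity) hA (by linarith)
  have hden0 : (0:ℝ) < 1 + t ^ α := by positivity
  have hRHS : (c2*(1+X)) ^ β / (2 * (3*(1+X)) ^ α) ≤ t ^ β / (1 + t ^ α) :=
    div_le_div₀ (by positivity) hnum (by positivity) hB
  refine le_trans (le_of_eq ?_) hRHS
  rw [Real.mul_rpow hc2pos.le hX1.le, Real.mul_rpow (by norm_num : (0:ℝ) ≤ 3) hX1.le,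
    Real.rpow_sub hX1]
  field_simp

lemma agmon_intlow (N : ℕ) (hN : 0 < N) {V : EuclideanSpace ℝ (Fin N) → ℝ}
    (hV0 : ∀ y, 0 ≤ V y) {x z : EuclideanSpace ℝ (Fin N)} {r ρ c : ℝ}
    (hρ : 0 < ρ)
    (hsub : ball z ρ ⊆ ball x r)
    (hlow : ∀ y ∈ ball z ρ, c ≤ V y)
    (hint : IntegrableOn V (ball x r)) :
    c * (ρ ^ N * (volume (ball (0 : EuclideanSpace ℝ (Fin N)) 1)).toReal)
      ≤ ∫ y in ball x r, V y := by
  haveI : Nonempty (Fin N) := ⟨⟨0, hN⟩⟩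
  have hvol : volume (ball z ρ) =
      ENNReal.ofReal (ρ ^ N) * volume (ball (0 : EuclideanSpace ℝ (Fin N)) 1) := by
    rw [Measure.addHaar_ball volume z hρ.le, finrank_euclideanSpace_fin]
  have hfin : volume (ball z ρ) ≠ ⊤ := measure_ball_lt_top.ne
  have h1 : c * (volume (ball z ρ)).toReal ≤ ∫ y in ball z ρ, V y :=
    by have h := setIntegral_ge_of_const_le_real measurableSet_ball hfin (fun y hy => hlow y hy)
         (hint.mono_set hsub)
       simpa only [smul_eq_mul, mul_comm, measureReal_def] using h
  have h2 : (volume (ball z ρ)).toReal =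
      ρ ^ N * (volume (ball (0 : EuclideanSpace ℝ (Fin N)) 1)).toReal := by
    rw [hvol, ENNReal.toReal_mul, ENNReal.toReal_ofReal (by positivity)]
  have h3 : ∫ y in ball z ρ, V y ≤ ∫ y in ball x r, V y :=
    setIntegral_mono_set hint (Filter.Eventually.of_forall fun y => hV0 y)
      (HasSubset.Subset.eventuallyLE hsub)
  calc c * (ρ ^ N * (volume (ball (0 : EuclideanSpace ℝ (Fin N)) 1)).toReal)
      = c * (volume (ball z ρ)).toReal := by rw [h2]
    _ ≤ ∫ y in ball z ρ, V y := h1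
    _ ≤ ∫ y in ball x r, V y := h3

/-- For `N > 2`, `α > 2` and `β ≥ α`, setting
`R(x) = sup { r > 0 : r^{2-N} ∫_{B(x,r)} Ṽ(y) dy ≤ 1 }` with `Ṽ(y) = |y|^β/(1+|y|^α)`,
there exists `C = C(α, β, N) > 0` such that `R(x) ≤ C (1 + |x|)^{(α-β)/2}` for all `x`,
i.e. the Agmon-type function `m(x) = 1/R(x)` satisfies
`m(x) ≥ C' (1+|x|)^{(β-α)/2}`. -/
theorem agmon_R_upper_bound_supercritical (N : ℕ) (hN : 2 < N) (α β : ℝ)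
    (hα : 2 < α) (hβ : α ≤ β) :
    ∃ C : ℝ, 0 < C ∧ ∀ x : EuclideanSpace ℝ (Fin N),
      sSup {r : ℝ | 0 < r ∧
          r ^ (2 - (N : ℝ)) * ∫ y in Metric.ball x r, ‖y‖ ^ β / (1 + ‖y‖ ^ α) ≤ 1}
        ≤ C * (1 + ‖x‖) ^ ((α - β) / 2) := by
  have hN0 : 0 < N := by omega
  set E := EuclideanSpace ℝ (Fin N)
  set κ : ℝ := (volume (ball (0 : E) 1)).toReal with hκdef
  have hκ : 0 < κ :=
    ENNReal.toReal_pos (measure_ball_pos _ _ one_pos).ne' measure_ball_lt_top.ne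
  set c2 : ℝ := min 1 ((1/4) * 2 ^ ((α-β)/2)) / 2 with hc2def
  have hc2 : 0 < c2 := by
    have : (0:ℝ) < (1/4) * 2 ^ ((α-β)/2) := by positivity
    have := lt_min one_pos this
    rw [hc2def]; linarith
  set c3 : ℝ := c2 ^ β / (2 * 3 ^ α) with hc3def
  have hc3 : 0 < c3 := by rw [hc3def]; positivity
  set c5 : ℝ := (1/2) ^ (β - α) / (2 ^ α + 1) with hc5def
  have hc5 : 0 < c5 := by rw [hc5def]; positivity
  set S2 : ℝ := Real.sqrt ((4:ℝ) ^ N / (c3 * κ)) with hS2def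
  set C1 : ℝ := max 2 (Real.sqrt ((4:ℝ) ^ N / (c5 * κ))) with hC1def
  have hC1two : (2:ℝ) ≤ C1 := le_max_left _ _
  have hC1 : 0 < C1 := by linarith
  set C : ℝ := max (max 1 S2) (C1 * (C1/2) ^ ((β-α)/2)) with hCdef
  have hC1le : (1:ℝ) ≤ C := le_trans (le_max_left _ _) (le_max_left _ _)
  have hC : 0 < C := by linarith
  refine ⟨C, hC, fun x => ?_⟩
  have hX1 : (0:ℝ) < 1 + ‖x‖ := by positivity
  set P : ℝ := (1 + ‖x‖) ^ ((α - β) / 2) with hPdef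
  have hP : 0 < P := Real.rpow_pos_of_pos hX1 _
  apply Real.sSup_le _ (by positivity)
  rintro r ⟨hr0, hle⟩
  by_cases hsmall : r ≤ P
  · calc r ≤ P := hsmall
      _ = 1 * P := (one_mul P).symm
      _ ≤ C * P := by nlinarith
  push_neg at hsmall
  -- common facts
  have hrpow : (0:ℝ) < r ^ (2 - (N:ℝ)) := Real.rpow_pos_of_pos hr0 _
  have hV0 : ∀ y : E, 0 ≤ ‖y‖ ^ β / (1 + ‖y‖ ^ α) := fun y => by positivity
  have hint : IntegrableOn (fun y : E => ‖y‖ ^ β / (1 + ‖y‖ ^ α)) (ball x r) := by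
    have hc : Continuous fun y : E => ‖y‖ ^ β / (1 + ‖y‖ ^ α) :=
      agmon_Vcont (by linarith) (by linarith)
    exact (hc.locallyIntegrable.integrableOn_isCompact
      (isCompact_closedBall x r)).mono_set ball_subset_closedBall
  obtain ⟨z, hsub, hlowgeom⟩ := agmon_geom N hN0 x hr0
  have hρ : (0:ℝ) < r/4 := by linarith
  have hnormub : ∀ y ∈ ball z (r/4), ‖y‖ ≤ ‖x‖ + r := by
    intro y hy
    have hyx : y ∈ ball x r := hsub hy
    rw [mem_ball] at hyx
    have : ‖y‖ - ‖x‖ ≤ ‖y - x‖ := norm_sub_norm_le y x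
    rw [← dist_eq_norm] at this
    linarith
  -- key algebraic identity
  have hpowid : r ^ (2 - (N:ℝ)) * (r/4) ^ N = r ^ 2 / 4 ^ N := by
    have h1 : ((r:ℝ)/4) ^ N = r ^ N / 4 ^ N := div_pow r 4 N
    have h2 : r ^ (2 - (N:ℝ)) * r ^ (N:ℕ) = r ^ 2 := by
      rw [← Real.rpow_natCast r N, ← Real.rpow_add hr0, ← Real.rpow_natCast r 2]
      norm_num
    rw [h1, ← mul_div_assoc, h2]
  rcases le_or_gt r (2*(1+‖x‖)) with hcase | hcase
  · -- intermediate case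
    have hlow : ∀ y ∈ ball z (r/4), c3 * (1+‖x‖) ^ (β-α) ≤ ‖y‖ ^ β / (1 + ‖y‖ ^ α) := by
      intro y hy
      exact agmon_pt2 hα hβ (norm_nonneg x) hsmall.le hcase (hlowgeom y hy) (hnormub y hy)
    have hI := agmon_intlow N hN0 hV0 hρ hsub hlow hint
    have hkey : c3 * (1+‖x‖) ^ (β-α) * κ * (r ^ 2 / 4 ^ N) ≤ 1 := by
      calc c3 * (1+‖x‖) ^ (β-α) * κ * (r ^ 2 / 4 ^ N)
          = r ^ (2 - (N:ℝ)) * (c3 * (1+‖x‖) ^ (β-α) * ((r/4) ^ N * κ)) := by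
            rw [← hpowid]; ring
        _ ≤ r ^ (2 - (N:ℝ)) * ∫ y in ball x r, ‖y‖ ^ β / (1 + ‖y‖ ^ α) := by
            exact mul_le_mul_of_nonneg_left hI hrpow.le
        _ ≤ 1 := hle
    -- r^2 ≤ S2^2 * P^2
    have hQ : (0:ℝ) < (1+‖x‖) ^ (β-α) := Real.rpow_pos_of_pos hX1 _
    have hPP : P * P = (1+‖x‖) ^ (α-β) := by
      rw [hPdef, ← Real.rpow_add hX1]; ring_nf
    have hQP : (1+‖x‖) ^ (β-α) * (1+‖x‖) ^ (α-β) = 1 := by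
      rw [← Real.rpow_add hX1]; norm_num
    have hS2sq : S2 ^ 2 = (4:ℝ) ^ N / (c3 * κ) := by
      rw [hS2def, Real.sq_sqrt (by positivity)]
    have h4 : (0:ℝ) < (4:ℝ) ^ N := by positivity
    have hkey' : c3 * (1+‖x‖) ^ (β-α) * κ * r ^ 2 ≤ 4 ^ N := by
      have h := mul_le_mul_of_nonneg_right hkey h4.le
      rwa [one_mul, mul_assoc (c3 * (1+‖x‖) ^ (β-α) * κ), div_mul_cancel₀ _ h4.ne'] at h
    have hr2 : r ^ 2 ≤ (S2 * P) ^ 2 := by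
      have expand : (S2 * P) ^ 2 = ((4:ℝ) ^ N / (c3 * κ)) * ((1+‖x‖) ^ (α-β)) := by
        rw [mul_pow, hS2sq, sq, hPP]
      rw [expand, div_mul_eq_mul_div, le_div_iff₀ (by positivity)]
      calc r ^ 2 * (c3 * κ)
          = c3 * κ * r ^ 2 * ((1+‖x‖) ^ (β-α) * (1+‖x‖) ^ (α-β)) := by rw [hQP]; ring
        _ = c3 * (1+‖x‖) ^ (β-α) * κ * r ^ 2 * (1+‖x‖) ^ (α-β) := by ring
        _ ≤ 4 ^ N * (1+‖x‖) ^ (α-β) :=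
            mul_le_mul_of_nonneg_right hkey' (Real.rpow_pos_of_pos hX1 _).le
    have hS2P : 0 ≤ S2 * P := by positivity
    have : r ≤ S2 * P := by
      have h := Real.sqrt_le_sqrt hr2
      rwa [Real.sqrt_sq hr0.le, Real.sqrt_sq hS2P] at h
    calc r ≤ S2 * P := this
      _ ≤ C * P := by
          apply mul_le_mul_of_nonneg_right _ hP.le
          exact le_trans (le_max_right 1 S2) (le_max_left _ _)
  · -- far case
    have hhalf : ∀ y ∈ ball z (r/4), (1:ℝ)/2 ≤ ‖y‖ := by
      intro y hy
      have := hlowgeom y hy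
      have hxn : (0:ℝ) ≤ ‖x‖ := norm_nonneg x
      nlinarith
    have hlow : ∀ y ∈ ball z (r/4), c5 ≤ ‖y‖ ^ β / (1 + ‖y‖ ^ α) := by
      intro y hy
      exact agmon_pt1 (by linarith) hβ (hhalf y hy)
    have hI := agmon_intlow N hN0 hV0 hρ hsub hlow hint
    have hkey : c5 * κ * (r ^ 2 / 4 ^ N) ≤ 1 := by
      calc c5 * κ * (r ^ 2 / 4 ^ N)
          = r ^ (2 - (N:ℝ)) * (c5 * ((r/4) ^ N * κ)) := by rw [← hpowid]; ring
        _ ≤ r ^ (2 - (N:ℝ)) * ∫ y in ball x r, ‖y‖ ^ β / (1 + ‖y‖ ^ α) :=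
            mul_le_mul_of_nonneg_left hI hrpow.le
        _ ≤ 1 := hle
    have hS1sq : (Real.sqrt ((4:ℝ) ^ N / (c5 * κ))) ^ 2 = (4:ℝ) ^ N / (c5 * κ) :=
      Real.sq_sqrt (by positivity)
    have h4 : (0:ℝ) < (4:ℝ) ^ N := by positivity
    have hkey' : c5 * κ * r ^ 2 ≤ 4 ^ N := by
      have h := mul_le_mul_of_nonneg_right hkey h4.le
      rwa [one_mul, mul_assoc (c5 * κ), div_mul_cancel₀ _ h4.ne'] at h
    have hr2 : r ^ 2 ≤ (Real.sqrt ((4:ℝ) ^ N / (c5 * κ))) ^ 2 := by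
      rw [hS1sq, le_div_iff₀ (by positivity)]
      linarith [hkey']
    have hrC1 : r ≤ C1 := by
      have h := Real.sqrt_le_sqrt hr2
      rw [Real.sqrt_sq hr0.le, Real.sqrt_sq (Real.sqrt_nonneg _)] at h
      exact le_trans h (le_max_right _ _)
    have hxC1 : 1 + ‖x‖ ≤ C1/2 := by linarith
    have hPlow : (C1/2) ^ ((α-β)/2) ≤ P := by
      rw [hPdef]
      exact Real.rpow_le_rpow_of_nonpos hX1 hxC1 (by linarith)
    have hC1half : (0:ℝ) < C1/2 := by linarith
    have hid : C1 * (C1/2) ^ ((β-α)/2) * (C1/2) ^ ((α-β)/2) = C1 := by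
      rw [mul_assoc, ← Real.rpow_add hC1half]
      have he : (β-α)/2 + (α-β)/2 = 0 := by ring
      rw [he, Real.rpow_zero, mul_one]
    calc r ≤ C1 := hrC1
      _ = C1 * (C1/2) ^ ((β-α)/2) * (C1/2) ^ ((α-β)/2) := hid.symm
      _ ≤ C1 * (C1/2) ^ ((β-α)/2) * P := by
          apply mul_le_mul_of_nonneg_left hPlow
          positivity
      _ ≤ C * P := by
          apply mul_le_mul_of_nonneg_right _ hP.le
          exact le_max_right _ _
end

section
/- Let N > 2 be an integer, α > 2, β > α − 2, 0 ≤ γ ≤ β, and let k > 0 satisfy k > β − N + 2 and k(β − α + 2)/2 > β + 2. Then there exists a constant C > 0 such that: (a) for every x ∈ ℝ^N, ∫_{{y : |x−y| > 1+|y|}} |x|^γ (1 + |x−y|^k (1+|y|)^{k(β−α)/2})^{−1} |x−y|^{2−N} dy ≤ C; and (b) for every y ∈ ℝ^N, ∫_{{x : |x−y| > 1+|y|}} |x|^γ (1 + |x−y|^k (1+|x|)^{k(β−α)/2})^{−1} |x−y|^{2−N} dx ≤ C. -/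
open Real MeasureTheory

set_option maxHeartbeats 1000000

/-- Auxiliary: for `r ≥ 1` and `c ≥ 0`, `r ^ (-c) ≤ 2^c * (1+r)^(-c)`. -/
lemma aux_inv_bound {r c : ℝ} (hr : 1 ≤ r) (hc : 0 ≤ c) :
    r ^ (-c) ≤ 2 ^ c * (1 + r) ^ (-c) := by
  have hr0 : (0:ℝ) < r := by linarith
  have h1r : (0:ℝ) < 1 + r := by linarith
  have h3 : (1 + r) ^ c ≤ 2 ^ c * r ^ c := by
    rw [← Real.mul_rpow (by norm_num) hr0.le]
    exact Real.rpow_le_rpow h1r.le (by linarith) hc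
  have h4 : (0:ℝ) < (1 + r) ^ c := Real.rpow_pos_of_pos h1r c
  have h5 : (0:ℝ) < r ^ c := Real.rpow_pos_of_pos hr0 c
  have h6 : (0:ℝ) < (2:ℝ) ^ c := Real.rpow_pos_of_pos (by norm_num) c
  rw [Real.rpow_neg hr0.le, Real.rpow_neg h1r.le]
  calc (r ^ c)⁻¹ = 2 ^ c * (2 ^ c * r ^ c)⁻¹ := by
        field_simp
    _ ≤ 2 ^ c * ((1 + r) ^ c)⁻¹ :=
        mul_le_mul_of_nonneg_left (inv_anti₀ h4 h3) h6.le

/-- Pointwise kernel bound used for the integral in the `y` variable. -/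
lemma ptA {γ k m mp A p q c₁ c₂ Nr r s nx : ℝ}
    (hγ0 : 0 ≤ γ) (hmmp : m ≤ mp) (hpq : p.HolderConjugate q)
    (hc1 : c₁ = (Nr - A) * p) (hc2 : c₂ = mp * q) (hAdef : A = γ + 2 - k + (mp - m))
    (hc1' : 0 ≤ c₁) (hs0 : 0 ≤ s) (hsr : 1 + s ≤ r) (hr1 : 1 < r)
    (hnx0 : 0 ≤ nx) (hnx : nx ≤ 2 * r) :
    nx ^ γ * (1 + r ^ k * (1 + s) ^ m)⁻¹ * r ^ (2 - Nr)
      ≤ 2 ^ γ * (2 ^ c₁ * (1 + r) ^ (-c₁) + (1 + s) ^ (-c₂)) := by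
  have hr0 : (0:ℝ) < r := by linarith
  have h1s : (0:ℝ) < 1 + s := by linarith
  have hX : (0:ℝ) < r ^ k * (1 + s) ^ m := by positivity
  have e1 : nx ^ γ ≤ 2 ^ γ * r ^ γ := by
    rw [← Real.mul_rpow (by norm_num) hr0.le]
    exact Real.rpow_le_rpow hnx0 hnx hγ0
  have e2 : (1 + r ^ k * (1 + s) ^ m)⁻¹ ≤ r ^ (-k) * ((1 + s) ^ (-mp) * r ^ (mp - m)) := by
    have h2a : (1 + r ^ k * (1 + s) ^ m)⁻¹ ≤ (r ^ k * (1 + s) ^ m)⁻¹ := by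
      apply inv_anti₀ hX; linarith
    have h2b : (r ^ k * (1 + s) ^ m)⁻¹ = r ^ (-k) * (1 + s) ^ (-m) := by
      rw [mul_inv, ← Real.rpow_neg hr0.le, ← Real.rpow_neg h1s.le]
    have h2c : (1 + s) ^ (-mp) * (1 + s) ^ (mp - m) = (1 + s) ^ (-m) := by
      rw [← Real.rpow_add h1s]; congr 1; ring
    have h2d : (1 + s) ^ (mp - m) ≤ r ^ (mp - m) :=
      Real.rpow_le_rpow h1s.le hsr (by linarith)
    have h2e : (0:ℝ) ≤ r ^ (-k) := Real.rpow_nonneg hr0.le _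
    have h2f : (0:ℝ) ≤ (1 + s) ^ (-mp) := Real.rpow_nonneg h1s.le _
    calc (1 + r ^ k * (1 + s) ^ m)⁻¹ ≤ (r ^ k * (1 + s) ^ m)⁻¹ := h2a
      _ = r ^ (-k) * ((1 + s) ^ (-mp) * (1 + s) ^ (mp - m)) := by rw [h2b, h2c]
      _ ≤ r ^ (-k) * ((1 + s) ^ (-mp) * r ^ (mp - m)) := by
          apply mul_le_mul_of_nonneg_left _ h2e
          exact mul_le_mul_of_nonneg_left h2d h2f
  have e3 : nx ^ γ * (1 + r ^ k * (1 + s) ^ m)⁻¹ * r ^ (2 - Nr)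
      ≤ 2 ^ γ * (r ^ (A - Nr) * (1 + s) ^ (-mp)) := by
    have h0 : (0:ℝ) ≤ r ^ (2 - Nr) := Real.rpow_nonneg hr0.le _
    have h1 : (0:ℝ) ≤ (1 + r ^ k * (1 + s) ^ m)⁻¹ := by positivity
    have step : nx ^ γ * (1 + r ^ k * (1 + s) ^ m)⁻¹ * r ^ (2 - Nr)
        ≤ (2 ^ γ * r ^ γ) * (r ^ (-k) * ((1 + s) ^ (-mp) * r ^ (mp - m))) * r ^ (2 - Nr) := by
      apply mul_le_mul_of_nonneg_right _ h0
      apply mul_le_mul e1 e2 h1 (by positivity)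
    refine step.trans (le_of_eq ?_)
    have hcomb : r ^ γ * r ^ (-k) * r ^ (mp - m) * r ^ (2 - Nr) = r ^ (A - Nr) := by
      rw [← Real.rpow_add hr0, ← Real.rpow_add hr0, ← Real.rpow_add hr0]
      congr 1; rw [hAdef]; ring
    calc (2 ^ γ * r ^ γ) * (r ^ (-k) * ((1 + s) ^ (-mp) * r ^ (mp - m))) * r ^ (2 - Nr)
        = 2 ^ γ * ((r ^ γ * r ^ (-k) * r ^ (mp - m) * r ^ (2 - Nr)) * (1 + s) ^ (-mp)) := by
          ring
      _ = 2 ^ γ * (r ^ (A - Nr) * (1 + s) ^ (-mp)) := by rw [hcomb]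
  refine e3.trans ?_
  have hX0 : (0:ℝ) ≤ r ^ (A - Nr) := Real.rpow_nonneg hr0.le _
  have hY0 : (0:ℝ) ≤ (1 + s) ^ (-mp) := Real.rpow_nonneg h1s.le _
  have e4 := Real.young_inequality_of_nonneg hX0 hY0 hpq
  have e5 : (r ^ (A - Nr)) ^ p = r ^ (-c₁) := by
    rw [← Real.rpow_mul hr0.le]; congr 1; rw [hc1]; ring
  have e6 : ((1 + s) ^ (-mp)) ^ q = (1 + s) ^ (-c₂) := by
    rw [← Real.rpow_mul h1s.le]; congr 1; rw [hc2]; ring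
  have e7 : r ^ (-c₁) ≤ 2 ^ c₁ * (1 + r) ^ (-c₁) := aux_inv_bound hr1.le hc1'
  have e8 : (r ^ (A - Nr)) ^ p / p ≤ (r ^ (A - Nr)) ^ p :=
    div_le_self (Real.rpow_nonneg hX0 p) hpq.lt.le
  have e9 : ((1 + s) ^ (-mp)) ^ q / q ≤ ((1 + s) ^ (-mp)) ^ q :=
    div_le_self (Real.rpow_nonneg hY0 q) hpq.symm.lt.le
  have h2γ : (0:ℝ) ≤ (2:ℝ) ^ γ := Real.rpow_nonneg (by norm_num) γ
  calc 2 ^ γ * (r ^ (A - Nr) * (1 + s) ^ (-mp))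
      ≤ 2 ^ γ * ((r ^ (A - Nr)) ^ p / p + ((1 + s) ^ (-mp)) ^ q / q) :=
        mul_le_mul_of_nonneg_left e4 h2γ
    _ ≤ 2 ^ γ * ((r ^ (A - Nr)) ^ p + ((1 + s) ^ (-mp)) ^ q) :=
        mul_le_mul_of_nonneg_left (add_le_add e8 e9) h2γ
    _ = 2 ^ γ * (r ^ (-c₁) + (1 + s) ^ (-c₂)) := by rw [e5, e6]
    _ ≤ 2 ^ γ * (2 ^ c₁ * (1 + r) ^ (-c₁) + (1 + s) ^ (-c₂)) :=
        mul_le_mul_of_nonneg_left (add_le_add_left e7 _) h2γ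

/-- Pointwise kernel bound used for the integral in the `x` variable. -/
lemma ptB {γ k m δ c₃ Nr r nx : ℝ}
    (hγ0 : 0 ≤ γ) (hδ1 : δ ≤ k + m - γ - 2) (hδ2 : δ ≤ k - 2) (hδ0 : 0 ≤ δ)
    (hc3 : c₃ = Nr + δ) (hNr : 0 ≤ Nr) (hr1 : 1 < r) (hx1 : 1 ≤ nx)
    (hnx : 1 + nx ≤ 2 * r) :
    nx ^ γ * (1 + r ^ k * (1 + nx) ^ m)⁻¹ * r ^ (2 - Nr)
      ≤ 2 ^ |γ - m| * 2 ^ c₃ * (1 + r) ^ (-c₃) := by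
  have hr0 : (0:ℝ) < r := by linarith
  have h1x : (0:ℝ) < 1 + nx := by linarith
  have h2x : (2:ℝ) ≤ 1 + nx := by linarith
  have hX : (0:ℝ) < r ^ k * (1 + nx) ^ m := by positivity
  have e1 : nx ^ γ ≤ (1 + nx) ^ γ :=
    Real.rpow_le_rpow (by linarith) (by linarith) hγ0
  have e2 : (1 + r ^ k * (1 + nx) ^ m)⁻¹ ≤ r ^ (-k) * (1 + nx) ^ (-m) := by
    have h2a : (1 + r ^ k * (1 + nx) ^ m)⁻¹ ≤ (r ^ k * (1 + nx) ^ m)⁻¹ := by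
      apply inv_anti₀ hX; linarith
    have h2b : (r ^ k * (1 + nx) ^ m)⁻¹ = r ^ (-k) * (1 + nx) ^ (-m) := by
      rw [mul_inv, ← Real.rpow_neg hr0.le, ← Real.rpow_neg h1x.le]
    rw [← h2b]; exact h2a
  have e3 : nx ^ γ * (1 + r ^ k * (1 + nx) ^ m)⁻¹ * r ^ (2 - Nr)
      ≤ (1 + nx) ^ (γ - m) * r ^ (2 - k - Nr) := by
    have h0 : (0:ℝ) ≤ r ^ (2 - Nr) := Real.rpow_nonneg hr0.le _
    have h1 : (0:ℝ) ≤ (1 + r ^ k * (1 + nx) ^ m)⁻¹ := by positivity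
    have step : nx ^ γ * (1 + r ^ k * (1 + nx) ^ m)⁻¹ * r ^ (2 - Nr)
        ≤ (1 + nx) ^ γ * (r ^ (-k) * (1 + nx) ^ (-m)) * r ^ (2 - Nr) := by
      apply mul_le_mul_of_nonneg_right _ h0
      apply mul_le_mul e1 e2 h1 (by positivity)
    refine step.trans (le_of_eq ?_)
    have hx2 : (1 + nx) ^ γ * (1 + nx) ^ (-m) = (1 + nx) ^ (γ - m) := by
      rw [← Real.rpow_add h1x, ← sub_eq_add_neg]
    have hx3 : r ^ (-k) * r ^ (2 - Nr) = r ^ (2 - k - Nr) := by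
      rw [← Real.rpow_add hr0]; congr 1; ring
    calc (1 + nx) ^ γ * (r ^ (-k) * (1 + nx) ^ (-m)) * r ^ (2 - Nr)
        = ((1 + nx) ^ γ * (1 + nx) ^ (-m)) * (r ^ (-k) * r ^ (2 - Nr)) := by ring
      _ = (1 + nx) ^ (γ - m) * r ^ (2 - k - Nr) := by rw [hx2, hx3]
  refine e3.trans ?_
  have habs : (1:ℝ) ≤ 2 ^ |γ - m| := Real.one_le_rpow (by norm_num) (abs_nonneg _)
  have e4 : (1 + nx) ^ (γ - m) ≤ 2 ^ |γ - m| * r ^ (max (γ - m) 0) := by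
    rcases le_or_gt m γ with h | h
    · have habs2 : |γ - m| = γ - m := abs_of_nonneg (by linarith)
      have hmax : max (γ - m) 0 = γ - m := max_eq_left (by linarith)
      rw [habs2, hmax, ← Real.mul_rpow (by norm_num) hr0.le]
      exact Real.rpow_le_rpow h1x.le (by linarith) (by linarith)
    · have hmax : max (γ - m) 0 = 0 := max_eq_right (by linarith)
      rw [hmax, Real.rpow_zero, mul_one]
      have h5 : (1 + nx) ^ (γ - m) ≤ 2 ^ (γ - m) := by
        have hmg : (0:ℝ) ≤ m - γ := by linarith
        have h5a : (2:ℝ) ^ (m - γ) ≤ (1 + nx) ^ (m - γ) :=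
          Real.rpow_le_rpow (by norm_num) h2x hmg
        have h5b : (0:ℝ) < (2:ℝ) ^ (m - γ) := Real.rpow_pos_of_pos (by norm_num) _
        have h5c : (γ - m) = -(m - γ) := by ring
        rw [h5c, Real.rpow_neg h1x.le, Real.rpow_neg (by norm_num : (0:ℝ) ≤ 2)]
        exact inv_anti₀ h5b h5a
      have h6 : (2:ℝ) ^ (γ - m) ≤ 1 :=
        Real.rpow_le_one_of_one_le_of_nonpos (by norm_num) (by linarith)
      linarith
  have e5 : r ^ (max (γ - m) 0) * r ^ (2 - k - Nr) = r ^ (max (γ - m) 0 + (2 - k - Nr)) :=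
    (Real.rpow_add hr0 _ _).symm
  have e6 : r ^ (max (γ - m) 0 + (2 - k - Nr)) ≤ r ^ (-c₃) := by
    apply Real.rpow_le_rpow_of_exponent_le hr1.le
    rcases max_cases (γ - m) 0 with ⟨hm, _⟩ | ⟨hm, _⟩ <;> rw [hm, hc3] <;> linarith
  have e7 : r ^ (-c₃) ≤ 2 ^ c₃ * (1 + r) ^ (-c₃) :=
    aux_inv_bound hr1.le (by rw [hc3]; linarith)
  have h0 : (0:ℝ) ≤ r ^ (2 - k - Nr) := Real.rpow_nonneg hr0.le _
  calc (1 + nx) ^ (γ - m) * r ^ (2 - k - Nr)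
      ≤ (2 ^ |γ - m| * r ^ (max (γ - m) 0)) * r ^ (2 - k - Nr) :=
        mul_le_mul_of_nonneg_right e4 h0
    _ = 2 ^ |γ - m| * (r ^ (max (γ - m) 0) * r ^ (2 - k - Nr)) := by ring
    _ = 2 ^ |γ - m| * r ^ (max (γ - m) 0 + (2 - k - Nr)) := by rw [e5]
    _ ≤ 2 ^ |γ - m| * r ^ (-c₃) :=
        mul_le_mul_of_nonneg_left e6 (by positivity)
    _ ≤ 2 ^ |γ - m| * (2 ^ c₃ * (1 + r) ^ (-c₃)) :=
        mul_le_mul_of_nonneg_left e7 (by positivity)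
    _ = 2 ^ |γ - m| * 2 ^ c₃ * (1 + r) ^ (-c₃) := by ring

/-- Let `N > 2`, `α > 2`, `β > α - 2`, `0 ≤ γ ≤ β` and `k > 0` with
`k > β - N + 2` and `k(β - α + 2)/2 > β + 2`. Then there is `C > 0` such that the
kernel bound `|x|^γ (1 + |x-y|^k (1+|y|)^{k(β-α)/2})^{-1} |x-y|^{2-N}` integrates, over
the region `E₂ = {|x-y| > 1+|y|}`, to at most `C`, both in the `y` variable (for fixed
`x`) and in the `x` variable (for fixed `y`, with `(1+|y|)` replaced by `(1+|x|)` in the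
kernel). -/
theorem kernel_integral_bounds_E2 (N : ℕ) (hN : 2 < N) (α β γ k : ℝ)
    (hα : 2 < α) (hβ : α - 2 < β) (hγ0 : 0 ≤ γ) (hγβ : γ ≤ β) (hk : 0 < k)
    (hk1 : β - N + 2 < k) (hk2 : β + 2 < k * (β - α + 2) / 2) :
    ∃ C : ℝ, 0 < C ∧
      (∀ x : EuclideanSpace ℝ (Fin N),
        (∫ y in {y : EuclideanSpace ℝ (Fin N) | 1 + ‖y‖ < ‖x - y‖},
          ‖x‖ ^ γ * (1 + ‖x - y‖ ^ k * (1 + ‖y‖) ^ (k * (β - α) / 2))⁻¹ *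
            ‖x - y‖ ^ (2 - (N : ℝ))) ≤ C)
    ∧ (∀ y : EuclideanSpace ℝ (Fin N),
        (∫ x in {x : EuclideanSpace ℝ (Fin N) | 1 + ‖y‖ < ‖x - y‖},
          ‖x‖ ^ γ * (1 + ‖x - y‖ ^ k * (1 + ‖x‖) ^ (k * (β - α) / 2))⁻¹ *
            ‖x - y‖ ^ (2 - (N : ℝ))) ≤ C) := by
  have hN' : (2:ℝ) < (N:ℝ) := by exact_mod_cast hN
  have hN0 : (0:ℝ) < (N:ℝ) := by linarith
  set m : ℝ := k * (β - α) / 2 with hm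
  have hexpand : k * (β - α + 2) / 2 = k + m := by rw [hm]; ring
  have hkm : γ + 2 < k + m := by rw [← hexpand]; linarith
  have hkmβ : β + 2 < k + m := by rw [← hexpand]; linarith
  have hk2' : (2:ℝ) < k := by
    by_contra hcon
    push_neg at hcon
    have h1 : (0:ℝ) ≤ β - α + 2 := by linarith
    have h2 : k * (β - α + 2) ≤ 2 * (β - α + 2) :=
      mul_le_mul_of_nonneg_right hcon h1
    linarith
  set mp : ℝ := max m ((N:ℝ)/2) with hmp
  have hmmp : m ≤ mp := le_max_left _ _
  have hmp0 : 0 < mp := lt_of_lt_of_le (by linarith) (le_max_right _ _)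
  set A : ℝ := γ + 2 - k + (mp - m) with hA
  have hAmp : A < mp := by rw [hA]; linarith
  have hAN : A < (N:ℝ) := by
    rcases max_cases m ((N:ℝ)/2) with ⟨h1, h2⟩ | ⟨h1, h2⟩
    · have hc : mp = m := by rw [hmp, h1]
      rw [hA, hc]; linarith
    · have hc : mp = (N:ℝ)/2 := by rw [hmp, h1]
      rw [hA, hc]; linarith
  set T : ℝ := (max A 0 + min mp (N:ℝ)) / 2 with hT
  have hmaxmin : max A 0 < min mp (N:ℝ) := max_lt (lt_min hAmp hAN) (lt_min hmp0 hN0)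
  have hT0 : 0 < T := by
    have := le_max_right A 0
    rw [hT]; linarith
  have hTA : A < T := by
    have := le_max_left A 0
    rw [hT]; linarith
  have hTN : T < (N:ℝ) := by
    have := min_le_right mp (N:ℝ)
    rw [hT]; linarith
  have hTmp : T < mp := by
    have := min_le_left mp (N:ℝ)
    rw [hT]; linarith
  have hNT : 0 < (N:ℝ) - T := by linarith
  set p : ℝ := (N:ℝ) / ((N:ℝ) - T) with hpdef
  set q : ℝ := (N:ℝ) / T with hqdef
  have hp1 : 1 < p := by
    rw [hpdef, lt_div_iff₀ hNT]; linarith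
  have hpq : p.HolderConjugate q := by
    rw [Real.holderConjugate_iff]
    constructor
    · exact hp1
    · rw [hpdef, hqdef, inv_div, inv_div, ← add_div]
      field_simp
      ring
  set c₁ : ℝ := ((N:ℝ) - A) * p with hc1def
  set c₂ : ℝ := mp * q with hc2def
  have hc₁ : (N:ℝ) < c₁ := by
    have hkey : c₁ * ((N:ℝ) - T) = ((N:ℝ) - A) * (N:ℝ) := by
      rw [hc1def, hpdef]; field_simp
    by_contra hcon
    push_neg at hcon
    have h1 : c₁ * ((N:ℝ) - T) ≤ (N:ℝ) * ((N:ℝ) - T) :=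
      mul_le_mul_of_nonneg_right hcon hNT.le
    rw [hkey] at h1
    nlinarith [mul_pos hN0 (sub_pos.mpr hTA)]
  have hc₂ : (N:ℝ) < c₂ := by
    have hkey : c₂ * T = mp * (N:ℝ) := by
      rw [hc2def, hqdef]; field_simp
    by_contra hcon
    push_neg at hcon
    have h1 : c₂ * T ≤ (N:ℝ) * T := mul_le_mul_of_nonneg_right hcon hT0.le
    rw [hkey] at h1
    nlinarith [mul_pos hN0 (sub_pos.mpr hTmp)]
  have hc1' : (0:ℝ) ≤ c₁ := by linarith
  set δ : ℝ := min (k + m - γ - 2) (k - 2) with hδdef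
  have hδ0 : 0 < δ := lt_min (by linarith) (by linarith)
  set c₃ : ℝ := (N:ℝ) + δ with hc3def
  have hc₃ : (N:ℝ) < c₃ := by rw [hc3def]; linarith
  have key : ∀ c : ℝ, (N:ℝ) < c →
      Integrable (fun z : EuclideanSpace ℝ (Fin N) => (1 + ‖z‖) ^ (-c)) := by
    intro c hc
    apply integrable_one_add_norm
    rwa [finrank_euclideanSpace_fin]
  set I₁ : ℝ := ∫ z : EuclideanSpace ℝ (Fin N), (1 + ‖z‖) ^ (-c₁) with hI₁
  set I₂ : ℝ := ∫ z : EuclideanSpace ℝ (Fin N), (1 + ‖z‖) ^ (-c₂) with hI₂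
  set I₃ : ℝ := ∫ z : EuclideanSpace ℝ (Fin N), (1 + ‖z‖) ^ (-c₃) with hI₃
  have hI₁0 : 0 ≤ I₁ := integral_nonneg fun z => Real.rpow_nonneg (by positivity) _
  have hI₂0 : 0 ≤ I₂ := integral_nonneg fun z => Real.rpow_nonneg (by positivity) _
  have hI₃0 : 0 ≤ I₃ := integral_nonneg fun z => Real.rpow_nonneg (by positivity) _
  have h2γ0 : (0:ℝ) ≤ (2:ℝ) ^ γ := Real.rpow_nonneg (by norm_num) _
  have h2c10 : (0:ℝ) ≤ (2:ℝ) ^ c₁ := Real.rpow_nonneg (by norm_num) _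
  have h2c30 : (0:ℝ) ≤ (2:ℝ) ^ c₃ := Real.rpow_nonneg (by norm_num) _
  have habs0 : (0:ℝ) ≤ (2:ℝ) ^ |γ - m| := Real.rpow_nonneg (by norm_num) _
  have hCa0 : 0 ≤ 2 ^ γ * (2 ^ c₁ * I₁ + I₂) :=
    mul_nonneg h2γ0 (add_nonneg (mul_nonneg h2c10 hI₁0) hI₂0)
  have hCb0 : 0 ≤ 2 ^ |γ - m| * 2 ^ c₃ * I₃ :=
    mul_nonneg (mul_nonneg habs0 h2c30) hI₃0
  refine ⟨2 ^ γ * (2 ^ c₁ * I₁ + I₂) + 2 ^ |γ - m| * 2 ^ c₃ * I₃ + 1, by linarith, ?_, ?_⟩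
  · -- Part (a): integral in y, x fixed
    intro x
    have hSm : MeasurableSet {y : EuclideanSpace ℝ (Fin N) | 1 + ‖y‖ < ‖x - y‖} :=
      measurableSet_lt (by fun_prop) (by fun_prop)
    have hg1 : Integrable (fun y : EuclideanSpace ℝ (Fin N) => (1 + ‖x - y‖) ^ (-c₁)) :=
      (key c₁ hc₁).comp_sub_left x
    have hgint : Integrable (fun y : EuclideanSpace ℝ (Fin N) =>
        2 ^ γ * (2 ^ c₁ * (1 + ‖x - y‖) ^ (-c₁) + (1 + ‖y‖) ^ (-c₂))) :=
      ((hg1.const_mul _).add (key c₂ hc₂)).const_mul _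
    have hf0 : ∀ y : EuclideanSpace ℝ (Fin N),
        0 ≤ ‖x‖ ^ γ * (1 + ‖x - y‖ ^ k * (1 + ‖y‖) ^ m)⁻¹ * ‖x - y‖ ^ (2 - (N:ℝ)) := by
      intro y; positivity
    have hbound : ∀ y ∈ {y : EuclideanSpace ℝ (Fin N) | 1 + ‖y‖ < ‖x - y‖},
        ‖x‖ ^ γ * (1 + ‖x - y‖ ^ k * (1 + ‖y‖) ^ m)⁻¹ * ‖x - y‖ ^ (2 - (N:ℝ))
          ≤ 2 ^ γ * (2 ^ c₁ * (1 + ‖x - y‖) ^ (-c₁) + (1 + ‖y‖) ^ (-c₂)) := by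
      intro y hy
      simp only [Set.mem_setOf_eq] at hy
      have hy0 : (0:ℝ) ≤ ‖y‖ := norm_nonneg y
      have hr1 : (1:ℝ) < ‖x - y‖ := by linarith
      have hxr : ‖x‖ ≤ 2 * ‖x - y‖ := by
        have h1 : ‖x‖ ≤ ‖x - y‖ + ‖y‖ := by
          simpa using norm_add_le (x - y) y
        linarith
      exact ptA hγ0 hmmp hpq hc1def hc2def hA hc1' hy0 hy.le hr1 (norm_nonneg x) hxr
    calc (∫ y in {y : EuclideanSpace ℝ (Fin N) | 1 + ‖y‖ < ‖x - y‖},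
            ‖x‖ ^ γ * (1 + ‖x - y‖ ^ k * (1 + ‖y‖) ^ m)⁻¹ * ‖x - y‖ ^ (2 - (N:ℝ)))
        ≤ ∫ y in {y : EuclideanSpace ℝ (Fin N) | 1 + ‖y‖ < ‖x - y‖},
            2 ^ γ * (2 ^ c₁ * (1 + ‖x - y‖) ^ (-c₁) + (1 + ‖y‖) ^ (-c₂)) := by
          apply integral_mono_of_nonneg (ae_of_all _ hf0) hgint.restrict
          exact (ae_restrict_iff' hSm).mpr (ae_of_all _ hbound)
      _ ≤ ∫ y, 2 ^ γ * (2 ^ c₁ * (1 + ‖x - y‖) ^ (-c₁) + (1 + ‖y‖) ^ (-c₂)) := by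
          apply setIntegral_le_integral hgint
          exact ae_of_all _ fun y => by positivity
      _ = 2 ^ γ * (2 ^ c₁ * I₁ + I₂) := by
          rw [integral_const_mul, integral_add (hg1.const_mul _) (key c₂ hc₂),
            integral_const_mul]
          rw [integral_sub_left_eq_self
            (fun z : EuclideanSpace ℝ (Fin N) => (1 + ‖z‖) ^ (-c₁)) volume x]
      _ ≤ 2 ^ γ * (2 ^ c₁ * I₁ + I₂) + 2 ^ |γ - m| * 2 ^ c₃ * I₃ + 1 := by linarith
  · -- Part (b): integral in x, y fixed
    intro y
    have hSm : MeasurableSet {x : EuclideanSpace ℝ (Fin N) | 1 + ‖y‖ < ‖x - y‖} :=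
      measurableSet_lt (by fun_prop) (by fun_prop)
    have hg1 : Integrable (fun x : EuclideanSpace ℝ (Fin N) => (1 + ‖x - y‖) ^ (-c₃)) :=
      (key c₃ hc₃).comp_sub_right y
    have hgint : Integrable (fun x : EuclideanSpace ℝ (Fin N) =>
        2 ^ |γ - m| * 2 ^ c₃ * (1 + ‖x - y‖) ^ (-c₃)) := hg1.const_mul _
    have hf0 : ∀ x : EuclideanSpace ℝ (Fin N),
        0 ≤ ‖x‖ ^ γ * (1 + ‖x - y‖ ^ k * (1 + ‖x‖) ^ m)⁻¹ * ‖x - y‖ ^ (2 - (N:ℝ)) := by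
      intro x; positivity
    have hbound : ∀ x ∈ {x : EuclideanSpace ℝ (Fin N) | 1 + ‖y‖ < ‖x - y‖},
        ‖x‖ ^ γ * (1 + ‖x - y‖ ^ k * (1 + ‖x‖) ^ m)⁻¹ * ‖x - y‖ ^ (2 - (N:ℝ))
          ≤ 2 ^ |γ - m| * 2 ^ c₃ * (1 + ‖x - y‖) ^ (-c₃) := by
      intro x hx
      simp only [Set.mem_setOf_eq] at hx
      have hy0 : (0:ℝ) ≤ ‖y‖ := norm_nonneg y
      have hr1 : (1:ℝ) < ‖x - y‖ := by linarith
      have htri : ‖x - y‖ ≤ ‖x‖ + ‖y‖ := norm_sub_le x y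
      have hx1 : (1:ℝ) ≤ ‖x‖ := by linarith
      have hxr : 1 + ‖x‖ ≤ 2 * ‖x - y‖ := by
        have h1 : ‖x‖ ≤ ‖x - y‖ + ‖y‖ := by
          simpa using norm_add_le (x - y) y
        linarith
      exact ptB hγ0 (min_le_left _ _) (min_le_right _ _) hδ0.le hc3def hN0.le hr1 hx1 hxr
    calc (∫ x in {x : EuclideanSpace ℝ (Fin N) | 1 + ‖y‖ < ‖x - y‖},
            ‖x‖ ^ γ * (1 + ‖x - y‖ ^ k * (1 + ‖x‖) ^ m)⁻¹ * ‖x - y‖ ^ (2 - (N:ℝ)))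
        ≤ ∫ x in {x : EuclideanSpace ℝ (Fin N) | 1 + ‖y‖ < ‖x - y‖},
            2 ^ |γ - m| * 2 ^ c₃ * (1 + ‖x - y‖) ^ (-c₃) := by
          apply integral_mono_of_nonneg (ae_of_all _ hf0) hgint.restrict
          exact (ae_restrict_iff' hSm).mpr (ae_of_all _ hbound)
      _ ≤ ∫ x, 2 ^ |γ - m| * 2 ^ c₃ * (1 + ‖x - y‖) ^ (-c₃) := by
          apply setIntegral_le_integral hgint
          exact ae_of_all _ fun x => by positivity
      _ = 2 ^ |γ - m| * 2 ^ c₃ * I₃ := by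
          rw [integral_const_mul]
          rw [integral_sub_right_eq_self
            (fun z : EuclideanSpace ℝ (Fin N) => (1 + ‖z‖) ^ (-c₃)) y]
      _ ≤ 2 ^ γ * (2 ^ c₁ * I₁ + I₂) + 2 ^ |γ - m| * 2 ^ c₃ * I₃ + 1 := by linarith
end

section
/- For every integer N ≥ 1 and every 0 ≤ k < 1/2 there exists a natural number ζ = ζ(N,k) with the following property: for every Lipschitz continuous function ρ : ℝ^N → (0,∞) with Lipschitz constant k (i.e. |ρ(x) − ρ(y)| ≤ k|x − y| for all x, y), there exists a countable set of points (x_n)_{n∈ℕ} in ℝ^N such that the balls B(x_n, ρ(x_n)) cover ℝ^N, and every point of ℝ^N belongs to at most ζ of the double balls B(x_n, 2ρ(x_n)). -/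
open Metric MeasureTheory Set ENNReal

-- packing bound lemma
lemma packing_bound (N : ℕ) (hN : 1 ≤ N) (z : EuclideanSpace ℝ (Fin N))
    (r : EuclideanSpace ℝ (Fin N) → ℝ) (a R : ℝ) (ha : 0 < a)
    (T : Set (EuclideanSpace ℝ (Fin N)))
    (hra : ∀ x ∈ T, a ≤ r x)
    (hsub : ∀ x ∈ T, ball x (r x) ⊆ ball z R)
    (hdisj : T.PairwiseDisjoint (fun x => ball x (r x))) :
    T.Finite ∧ T.ncard ≤ ⌈(R / a) ^ N⌉₊ := by
  haveI : NeZero N := ⟨by omega⟩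
  rcases T.eq_empty_or_nonempty with rfl | ⟨x₀, hx₀⟩
  · simp
  have hR : 0 < R := by
    have hx : x₀ ∈ ball z R := hsub x₀ hx₀ (mem_ball_self (lt_of_lt_of_le ha (hra x₀ hx₀)))
    exact lt_of_le_of_lt dist_nonneg (mem_ball.mp hx)
  set μ : Measure (EuclideanSpace ℝ (Fin N)) := volume with hμ
  have hc0 : μ (ball (0 : EuclideanSpace ℝ (Fin N)) 1) ≠ 0 := (measure_ball_pos μ 0 one_pos).ne'
  have hctop : μ (ball (0 : EuclideanSpace ℝ (Fin N)) 1) ≠ ⊤ := measure_ball_lt_top.ne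
  have hball : ∀ (x : EuclideanSpace ℝ (Fin N)) (s : ℝ), 0 ≤ s →
      μ (ball x s) = ENNReal.ofReal (s ^ N) * μ (ball 0 1) := by
    intro x s hs
    rw [Measure.addHaar_ball μ x hs, finrank_euclideanSpace_fin]
  -- finite subset bound
  have key : ∀ F : Finset (EuclideanSpace ℝ (Fin N)), ↑F ⊆ T → F.card ≤ ⌈(R / a) ^ N⌉₊ := by
    intro F hF
    have h1 : (F.card : ℝ≥0∞) * (ENNReal.ofReal (a ^ N) * μ (ball 0 1))
        ≤ μ (⋃ x ∈ F, ball x (r x)) := by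
      rw [measure_biUnion_finset (hdisj.subset hF) (fun x _ => measurableSet_ball)]
      calc (F.card : ℝ≥0∞) * (ENNReal.ofReal (a ^ N) * μ (ball 0 1))
          = ∑ _x ∈ F, (ENNReal.ofReal (a ^ N) * μ (ball 0 1)) := by
            rw [Finset.sum_const, nsmul_eq_mul]
        _ ≤ ∑ x ∈ F, μ (ball x (r x)) := by
            refine Finset.sum_le_sum fun x hx => ?_
            rw [hball x (r x) (ha.le.trans (hra x (hF hx)))]
            exact mul_le_mul_left
              (ENNReal.ofReal_le_ofReal (pow_le_pow_left₀ ha.le (hra x (hF hx)) N)) _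
    have h2 : μ (⋃ x ∈ F, ball x (r x)) ≤ ENNReal.ofReal (R ^ N) * μ (ball 0 1) := by
      rw [← hball z R hR.le]
      exact measure_mono (Set.iUnion₂_subset fun x hx => hsub x (hF hx))
    have h3 : (F.card : ℝ≥0∞) * ENNReal.ofReal (a ^ N) ≤ ENNReal.ofReal (R ^ N) := by
      rw [← ENNReal.mul_le_mul_iff_left hc0 hctop, mul_assoc]
      exact h1.trans h2
    have h4 : (F.card : ℝ) * a ^ N ≤ R ^ N := by
      have := h3
      rw [← ENNReal.ofReal_natCast, ← ENNReal.ofReal_mul (by positivity)] at this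
      exact (ENNReal.ofReal_le_ofReal_iff (by positivity)).mp this
    have h5 : (F.card : ℝ) ≤ (R / a) ^ N := by
      rw [div_pow, le_div_iff₀ (by positivity)]
      exact h4
    exact Nat.cast_le.mp ((h5.trans (Nat.le_ceil _)) : (F.card : ℝ) ≤ (⌈(R / a) ^ N⌉₊ : ℝ))
  have hfin : T.Finite := by
    by_contra h
    have hinf : T.Infinite := h
    obtain ⟨t, hts, htf, htc⟩ := hinf.exists_subset_ncard_eq (⌈(R / a) ^ N⌉₊ + 1)
    have := key htf.toFinset (by simpa using hts)
    rw [← Set.ncard_eq_toFinset_card t htf] at this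
    omega
  refine ⟨hfin, ?_⟩
  have := key hfin.toFinset (by simp)
  rwa [← Set.ncard_eq_toFinset_card T hfin] at this


/-- For every `N ≥ 1` and `0 ≤ k < 1/2` there is `ζ = ζ(N,k) ∈ ℕ` such
that: for every Lipschitz function `ρ : ℝ^N → (0,∞)` with Lipschitz constant `k`, there is
a countable family of points `(xₙ)` such that the balls `B(xₙ, ρ(xₙ))` cover `ℝ^N` and
at most `ζ` of the double balls `B(xₙ, 2ρ(xₙ))` overlap at any point. -/
theorem covering_with_finite_overlap (N : ℕ) (hN : 1 ≤ N) (k : ℝ) (hk0 : 0 ≤ k)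
    (hk : k < 1 / 2) :
    ∃ ζ : ℕ, ∀ ρ : EuclideanSpace ℝ (Fin N) → ℝ, (∀ x, 0 < ρ x) →
      (∀ x y, |ρ x - ρ y| ≤ k * ‖x - y‖) →
      ∃ c : ℕ → EuclideanSpace ℝ (Fin N),
        (∀ z : EuclideanSpace ℝ (Fin N), ∃ n : ℕ, z ∈ ball (c n) (ρ (c n)))
        ∧ ∀ z : EuclideanSpace ℝ (Fin N),
            ({n : ℕ | z ∈ ball (c n) (2 * ρ (c n))}).Finite
            ∧ ({n : ℕ | z ∈ ball (c n) (2 * ρ (c n))}).ncard ≤ ζ := by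
  haveI : NeZero N := ⟨by omega⟩
  set X := EuclideanSpace ℝ (Fin N)
  have h2k : (0:ℝ) < 1 - 2 * k := by linarith
  have h2k' : (0:ℝ) < 1 + 2 * k := by linarith
  refine ⟨⌈(9 * (1 + 2 * k) / (1 - 2 * k)) ^ N⌉₊, fun ρ hρ hlip => ?_⟩
  have hlip' : ∀ x y : X, |ρ x - ρ y| ≤ k * dist x y := by
    intro x y; rw [dist_eq_norm]; exact hlip x y
  -- Zorn's lemma: a maximal separated set
  obtain ⟨M, hMsep, hMmax⟩ :
      ∃ M, Maximal (· ∈ {S : Set X | S.Pairwise fun x y => ρ x ≤ 2 * dist x y}) M := by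
    apply zorn_subset
    intro c hc hchain
    refine ⟨⋃₀ c, ?_, fun s hs => subset_sUnion_of_mem hs⟩
    intro x hx y hy hxy
    obtain ⟨s, hs, hxs⟩ := hx
    obtain ⟨t, ht, hyt⟩ := hy
    rcases hchain.total hs ht with hst | hts
    · exact (hc ht) (hst hxs) hyt hxy
    · exact (hc hs) hxs (hts hyt) hxy
  -- covering property
  have hcover : ∀ z : X, ∃ x ∈ M, dist z x < ρ x := by
    intro z
    by_cases hzM : z ∈ M
    · exact ⟨z, hzM, by rw [dist_self]; exact hρ z⟩
    by_contra hno
    push_neg at hno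
    have hins : (insert z M).Pairwise (fun x y => ρ x ≤ 2 * dist x y) := by
      intro x hx y hy hxy
      rcases hx with rfl | hx
      · rcases hy with rfl | hy
        · exact absurd rfl hxy
        · have h1 := hno y hy
          have h2 : ρ x - ρ y ≤ k * dist x y :=
            (le_abs_self _).trans (hlip' x y)
          nlinarith [dist_nonneg (x := x) (y := y),
            mul_nonneg (by linarith : (0:ℝ) ≤ 1 - k) (dist_nonneg (x := x) (y := y))]
      · rcases hy with rfl | hy
        · have h1 := hno x hx
          rw [dist_comm y x] at h1
          nlinarith [dist_nonneg (x := x) (y := y), hρ x]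
        · exact hMsep hx hy hxy
    have := hMmax hins (Set.subset_insert z M)
    exact hzM (this (Set.mem_insert z M))
  -- countable
  have hcnt : M.Countable := by
    apply Set.PairwiseDisjoint.countable_of_isOpen (s := fun x => ball x (ρ x / 4))
    · intro x hx y hy hxy
      simp only [Function.onFun]
      apply ball_disjoint_ball
      have h1 : ρ x ≤ 2 * dist x y := hMsep hx hy hxy
      have h2 : ρ y ≤ 2 * dist y x := hMsep hy hx (Ne.symm hxy)
      rw [dist_comm y x] at h2
      linarith
    · exact fun x _ => isOpen_ball
    · exact fun x _ => ⟨x, mem_ball_self (by have := hρ x; linarith)⟩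
  -- infinite
  have hinfM : M.Infinite := by
    intro hfin
    have hb : Bornology.IsBounded (⋃ x ∈ M, ball x (ρ x)) :=
      (Bornology.isBounded_biUnion hfin).mpr fun x _ => isBounded_ball
    have huniv : (Set.univ : Set X) ⊆ ⋃ x ∈ M, ball x (ρ x) := by
      intro z _
      obtain ⟨x, hx, hd⟩ := hcover z
      exact Set.mem_biUnion hx (mem_ball.mpr hd)
    exact NormedSpace.unbounded_univ ℝ X (hb.subset huniv)
  haveI := hcnt.to_subtype
  haveI : Infinite M := hinfM.to_subtype
  obtain ⟨e⟩ : Nonempty (ℕ ≃ M) := nonempty_equiv_of_countable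
  set c : ℕ → X := fun n => (e n : X) with hc
  have hcinj : Function.Injective c :=
    Subtype.val_injective.comp e.injective
  have hcM : ∀ n, c n ∈ M := fun n => (e n).2
  refine ⟨c, ?_, ?_⟩
  · intro z
    obtain ⟨x, hx, hd⟩ := hcover z
    refine ⟨e.symm ⟨x, hx⟩, ?_⟩
    have : c (e.symm ⟨x, hx⟩) = x := by simp [hc]
    rw [this]
    exact mem_ball.mpr hd
  · intro z
    set T : Set X := {x ∈ M | dist z x < 2 * ρ x} with hT
    set a : ℝ := ρ z / (4 * (1 + 2 * k)) with haa
    set R : ℝ := (9 / 4) * (ρ z / (1 - 2 * k)) with hRR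
    have hTbound : T.Finite ∧ T.ncard ≤ ⌈(R / a) ^ N⌉₊ := by
      apply packing_bound N hN z (fun x => ρ x / 4) a R (div_pos (hρ z) (by linarith))
      · -- a ≤ ρ x / 4
        intro x hx
        obtain ⟨hxM, hxd⟩ := hx
        have h1 : ρ z - ρ x ≤ k * dist z x := (le_abs_self _).trans (hlip' z x)
        rw [haa, div_le_div_iff₀ (by positivity) (by norm_num)]
        nlinarith [dist_nonneg (x := z) (y := x), hρ x]
      · -- ball x (ρ x / 4) ⊆ ball z R
        intro x hx y hy
        obtain ⟨hxM, hxd⟩ := hx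
        rw [mem_ball] at hy ⊢
        have h1 : ρ x - ρ z ≤ k * dist x z := (le_abs_self _).trans (hlip' x z)
        rw [dist_comm x z] at h1
        have hkey : (1 - 2 * k) * ρ x ≤ ρ z := by
          nlinarith [dist_nonneg (x := z) (y := x)]
        have h2 : dist y z ≤ dist y x + dist x z := dist_triangle y x z
        rw [dist_comm x z] at h2
        have h3 : dist y z < (9 / 4) * ρ x := by linarith
        have h4 : (9 / 4 : ℝ) * ρ x ≤ R := by
          rw [hRR]
          have : ρ x ≤ ρ z / (1 - 2 * k) := by
            rw [le_div_iff₀ h2k]; linarith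
          linarith
        linarith
      · -- pairwise disjoint
        intro x hx y hy hxy
        simp only [Function.onFun]
        apply ball_disjoint_ball
        have h1 : ρ x ≤ 2 * dist x y := hMsep hx.1 hy.1 hxy
        have h2 : ρ y ≤ 2 * dist y x := hMsep hy.1 hx.1 (Ne.symm hxy)
        rw [dist_comm y x] at h2
        linarith
    obtain ⟨hTfin, hTcard⟩ := hTbound
    have hratio : R / a = 9 * (1 + 2 * k) / (1 - 2 * k) := by
      rw [hRR, haa]
      have hz := (hρ z).ne'
      field_simp
    rw [hratio] at hTcard
    have hAT : {n : ℕ | z ∈ ball (c n) (2 * ρ (c n))} = c ⁻¹' T := by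
      ext n
      simp only [Set.mem_setOf_eq, Set.mem_preimage, hT, mem_ball]
      exact ⟨fun h => ⟨hcM n, h⟩, fun h => h.2⟩
    constructor
    · rw [hAT]
      exact hTfin.preimage (hcinj.injOn)
    · calc ({n : ℕ | z ∈ ball (c n) (2 * ρ (c n))}).ncard
          ≤ T.ncard := by
            apply Set.ncard_le_ncard_of_injOn c _ (hcinj.injOn) hTfin
            intro n hn
            rw [hAT] at hn
            exact hn
        _ ≤ _ := hTcard
end
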